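/- arXiv:1406.2974 — 6 statements merged into one kernel-verified Lean document; each statement's English description precedes it below -/
import Mathlib

section
/- Define the class E* of totally disconnected locally compact (t.d.l.c.) Hausdorff groups as the smallest class containing all profinite groups and all discrete groups, closed under extensions by profinite or discrete quotients (if N ⊴ G is closed with N ∈ E* and G/N profinite or discrete then G ∈ E*), and closed under directed unions of open subgroups. Then for every G ∈ E*, every open subgroup O of G also belongs to E*. -/
universe u

/-- A profinite group: compact, totally disconnected and Hausdorff. -/
def IsProfiniteGrp (G : Type u) [TopologicalSpace G] : Prop :=
  CompactSpace G ∧ TotallyDisconnectedSpace G ∧ T2Space G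

/-- A topological group is compactly generated if it is generated by a compact subset. -/
def CompactlyGeneratedGrp (G : Type u) [Group G] [TopologicalSpace G] : Prop :=
  ∃ K : Set G, IsCompact K ∧ Subgroup.closure K = ⊤

/-- The class `E*`: the smallest class of t.d.l.c. groups containing profinite and discrete
groups, closed under extensions with profinite or discrete quotient, and closed under
directed unions of open subgroups. -/
inductive IsEStar : ∀ (G : Type u) [Group G] [TopologicalSpace G], Prop
  | profinite (G : Type u) [Group G] [TopologicalSpace G] [IsTopologicalGroup G]
      (h : IsProfiniteGrp G) : IsEStar G
  | discrete (G : Type u) [Group G] [TopologicalSpace G] [IsTopologicalGroup G]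
      [DiscreteTopology G] : IsEStar G
  | extension (G : Type u) [Group G] [TopologicalSpace G] [IsTopologicalGroup G]
      (N : Subgroup G) [N.Normal] (hN : IsClosed (N : Set G))
      (hNE : IsEStar N)
      (hQ : IsProfiniteGrp (G ⧸ N) ∨ DiscreteTopology (G ⧸ N)) : IsEStar G
  | directedUnion (G : Type u) [Group G] [TopologicalSpace G] [IsTopologicalGroup G]
      {ι : Type u} (O : ι → Subgroup G)
      (hdir : Directed (· ≤ ·) O)
      (hopen : ∀ i, IsOpen (O i : Set G))
      (hmem : ∀ i, IsEStar (O i))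
      (hcover : ∀ g : G, ∃ i, g ∈ O i) : IsEStar G

/-- Transfer of profiniteness along a homeomorphism. -/
private lemma isProfiniteGrp_congr {X Y : Type u} [TopologicalSpace X] [TopologicalSpace Y]
    (h : X ≃ₜ Y) (hX : IsProfiniteGrp X) : IsProfiniteGrp Y := by
  obtain ⟨h1, h2, h3⟩ := hX
  refine ⟨h.compactSpace, ?_, h.symm.isEmbedding.t2Space⟩
  exact (h.symm.isEmbedding.isTotallyDisconnected_range).1
    (isTotallyDisconnected_of_totallyDisconnectedSpace _)

/-- The canonical isomorphism between `A ∩ B` viewed as a subgroup of `B` and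
`A ∩ B` viewed as a subgroup of `A`. -/
private def subgroupOfSwap {G : Type u} [Group G] (A B : Subgroup G) :
    ↥(A.subgroupOf B) ≃* ↥(B.subgroupOf A) where
  toFun x := ⟨⟨x.1.1, x.2⟩, x.1.2⟩
  invFun x := ⟨⟨x.1.1, x.2⟩, x.1.2⟩
  left_inv _ := rfl
  right_inv _ := rfl
  map_mul' _ _ := rfl

private lemma continuous_subgroupOfSwap {G : Type u} [Group G] [TopologicalSpace G]
    (A B : Subgroup G) : Continuous (subgroupOfSwap A B) := by
  exact Continuous.subtype_mk (Continuous.subtype_mk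
    (continuous_subtype_val.comp continuous_subtype_val) _) _

private lemma continuous_subgroupOfSwap_symm {G : Type u} [Group G] [TopologicalSpace G]
    (A B : Subgroup G) : Continuous (subgroupOfSwap A B).symm := by
  exact Continuous.subtype_mk (Continuous.subtype_mk
    (continuous_subtype_val.comp continuous_subtype_val) _) _

/-- Membership in `E*` is invariant under topological group isomorphisms. -/
private theorem IsEStar.congr : ∀ {G : Type u} [Group G] [TopologicalSpace G],
    IsEStar G → ∀ {H : Type u} [Group H] [TopologicalSpace H] [IsTopologicalGroup H]
    (e : G ≃* H), Continuous e → Continuous e.symm → IsEStar H := by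
  intro G _ _ hG
  induction hG with
  | profinite G h =>
    intro H _ _ _ e hc hc'
    exact IsEStar.profinite H (isProfiniteGrp_congr ⟨e.toEquiv, hc, hc'⟩ h)
  | discrete G =>
    intro H _ _ _ e hc hc'
    haveI : DiscreteTopology H :=
      (Homeomorph.mk e.toEquiv hc hc').symm.isEmbedding.discreteTopology
    exact IsEStar.discrete H
  | extension G N hN hNE hQ ih =>
    intro H _ _ _ e hc hc'
    set N' : Subgroup H := N.map (e : G →* H) with hN'def
    haveI : N'.Normal := Subgroup.Normal.map inferInstance _ e.surjective
    have hN'closed : IsClosed (N' : Set H) := by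
      have hset : (N' : Set H) = ⇑e.symm ⁻¹' (N : Set G) := by
        ext x; exact Subgroup.mem_map_equiv
      rw [hset]
      exact hN.preimage hc'
    have hcontf : Continuous (e.subgroupMap N) := by
      apply continuous_induced_rng.2
      have : (Subtype.val ∘ e.subgroupMap N) = fun x : N => e x.1 := rfl
      rw [this]
      exact hc.comp continuous_subtype_val
    have hcontf' : Continuous (e.subgroupMap N).symm := by
      apply continuous_induced_rng.2
      have : (Subtype.val ∘ (e.subgroupMap N).symm) = fun x : N' => e.symm x.1 := rfl
      rw [this]
      exact hc'.comp continuous_subtype_val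
    have hNE' : IsEStar N' := ih (e.subgroupMap N) hcontf hcontf'
    -- quotient isomorphism
    have hmapeq : N.map (e : G →* H) = N' := rfl
    set q : G ⧸ N ≃* H ⧸ N' := QuotientGroup.congr N N' e hmapeq with hq_def
    have hqmk : (⇑q ∘ QuotientGroup.mk) = (QuotientGroup.mk ∘ ⇑e) := rfl
    have hqmk' : (⇑q.symm ∘ QuotientGroup.mk) = (QuotientGroup.mk ∘ ⇑e.symm) := rfl
    have hqc : Continuous q := by
      rw [(QuotientGroup.isQuotientMap_mk N).continuous_iff, hqmk]
      exact QuotientGroup.continuous_mk.comp hc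
    have hqc' : Continuous q.symm := by
      rw [(QuotientGroup.isQuotientMap_mk N').continuous_iff, hqmk']
      exact QuotientGroup.continuous_mk.comp hc'
    have hQ' : IsProfiniteGrp (H ⧸ N') ∨ DiscreteTopology (H ⧸ N') := by
      rcases hQ with hP | hD
      · exact Or.inl (isProfiniteGrp_congr ⟨q.toEquiv, hqc, hqc'⟩ hP)
      · exact Or.inr ((Homeomorph.mk q.toEquiv hqc hqc').symm.isEmbedding.discreteTopology)
    exact IsEStar.extension H N' hN'closed hNE' hQ'
  | directedUnion G O hdir hopen hmem hcover ih =>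
    intro H _ _ _ e hc hc'
    refine IsEStar.directedUnion H (fun i => (O i).map (e : G →* H)) ?_ ?_ ?_ ?_
    · intro i j
      obtain ⟨k, hik, hjk⟩ := hdir i j
      exact ⟨k, Subgroup.map_mono hik, Subgroup.map_mono hjk⟩
    · intro i
      have hset : (((O i).map (e : G →* H)) : Set H) = ⇑e.symm ⁻¹' (O i : Set G) := by
        ext x; exact Subgroup.mem_map_equiv
      rw [hset]
      exact (hopen i).preimage hc'
    · intro i
      refine ih i (e.subgroupMap (O i)) ?_ ?_
      · apply continuous_induced_rng.2
        have : (Subtype.val ∘ e.subgroupMap (O i)) = fun x : O i => e x.1 := rfl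
        rw [this]
        exact hc.comp continuous_subtype_val
      · apply continuous_induced_rng.2
        have : (Subtype.val ∘ (e.subgroupMap (O i)).symm)
            = fun x : ((O i).map (e : G →* H)) => e.symm x.1 := rfl
        rw [this]
        exact hc'.comp continuous_subtype_val
    · intro h
      obtain ⟨i, hi⟩ := hcover (e.symm h)
      exact ⟨i, ⟨e.symm h, hi, e.apply_symm_apply h⟩⟩

private theorem IsEStar.openSubgroup_aux : ∀ {G : Type u} [Group G] [TopologicalSpace G],
    IsEStar G → ∀ [IsTopologicalGroup G] (O : Subgroup G), IsOpen (O : Set G) → IsEStar O := by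
  intro G _ _ hG
  induction hG with
  | profinite G h =>
    intro _ O hO
    obtain ⟨h1, h2, h3⟩ := h
    have hcl : IsClosed (O : Set G) := O.isClosed_of_isOpen hO
    exact IsEStar.profinite _ ⟨isCompact_iff_compactSpace.mp hcl.isCompact,
      inferInstance, inferInstance⟩
  | discrete G =>
    intro _ O hO
    exact IsEStar.discrete _
  | extension G N hN hNE hQ ih =>
    intro _ O hO
    set N' : Subgroup ↥O := N.subgroupOf O with hN'def
    haveI : N'.Normal := Subgroup.normal_subgroupOf
    have hN'c : IsClosed (N' : Set ↥O) := by
      rw [hN'def, Subgroup.coe_subgroupOf]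
      exact hN.preimage continuous_subtype_val
    -- O ∩ N as a subgroup of N is open in N, hence in E*
    have hON_open : IsOpen ((O.subgroupOf N : Subgroup ↥N) : Set ↥N) := by
      rw [Subgroup.coe_subgroupOf]
      exact hO.preimage continuous_subtype_val
    have h1 : IsEStar ↥(O.subgroupOf N) := ih (O.subgroupOf N) hON_open
    have hNE' : IsEStar ↥N' :=
      IsEStar.congr h1 (subgroupOfSwap O N)
        (continuous_subgroupOfSwap O N) (continuous_subgroupOfSwap_symm O N)
    -- the quotient O ⧸ N' is isomorphic to the image of O in G ⧸ N
    set φ : ↥O →* G ⧸ N := (QuotientGroup.mk' N).comp O.subtype with hφdef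
    have hker : φ.ker = N' := by
      ext x
      simp [hφdef, hN'def, MonoidHom.mem_ker, Subgroup.mem_subgroupOf, QuotientGroup.eq_one_iff]
    set ψ : ↥O ⧸ N' ≃* ↥φ.range :=
      (QuotientGroup.quotientMulEquivOfEq hker.symm).trans
        (QuotientGroup.quotientKerEquivRange φ) with hψdef
    have hψmk : ∀ x : ↥O, ((ψ (QuotientGroup.mk x)) : G ⧸ N) = φ x := fun _ => rfl
    have hψc : Continuous ψ := by
      rw [(QuotientGroup.isQuotientMap_mk N').continuous_iff]
      apply continuous_induced_rng.2
      have : (Subtype.val ∘ ⇑ψ ∘ QuotientGroup.mk) = ⇑φ := rfl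
      rw [this]
      exact QuotientGroup.continuous_mk.comp continuous_subtype_val
    have hφopen : IsOpenMap ⇑φ := by
      intro U hU
      have : ⇑φ '' U = QuotientGroup.mk '' (Subtype.val '' U) := by
        rw [Set.image_image]; rfl
      rw [this]
      exact QuotientGroup.isOpenMap_coe _ (hO.isOpenMap_subtype_val U hU)
    have hψopen : IsOpenMap ⇑ψ := by
      intro U hU
      have hV : IsOpen (QuotientGroup.mk ⁻¹' U : Set ↥O) :=
        hU.preimage QuotientGroup.continuous_mk
      have himg : ⇑ψ '' U = Subtype.val ⁻¹' (⇑φ '' (QuotientGroup.mk ⁻¹' U)) := by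
        ext r
        constructor
        · rintro ⟨p, hp, rfl⟩
          obtain ⟨x, rfl⟩ := QuotientGroup.mk_surjective p
          exact ⟨x, hp, (hψmk x).symm⟩
        · rintro ⟨x, hx, hval⟩
          exact ⟨QuotientGroup.mk x, hx, Subtype.ext ((hψmk x).trans hval)⟩
      rw [himg]
      exact ((hφopen _ hV).preimage continuous_subtype_val)
    have hψhomeo : (↥O ⧸ N') ≃ₜ ↥φ.range :=
      Equiv.toHomeomorphOfContinuousOpen ψ.toEquiv hψc hψopen
    have hrange_open : IsOpen ((φ.range : Subgroup (G ⧸ N)) : Set (G ⧸ N)) := by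
      have : ((φ.range : Subgroup (G ⧸ N)) : Set (G ⧸ N)) = ⇑φ '' Set.univ := by
        ext x
        simp [MonoidHom.mem_range, Set.image_univ, Set.mem_range]
      rw [this]
      exact hφopen _ isOpen_univ
    have hQ' : IsProfiniteGrp (↥O ⧸ N') ∨ DiscreteTopology (↥O ⧸ N') := by
      rcases hQ with hP | hD
      · obtain ⟨c1, c2, c3⟩ := hP
        have hrc : IsClosed ((φ.range : Subgroup (G ⧸ N)) : Set (G ⧸ N)) :=
          Subgroup.isClosed_of_isOpen _ hrange_open
        have : CompactSpace ↥φ.range := isCompact_iff_compactSpace.mp hrc.isCompact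
        exact Or.inl (isProfiniteGrp_congr hψhomeo.symm ⟨this, inferInstance, inferInstance⟩)
      · exact Or.inr (hψhomeo.isEmbedding.discreteTopology)
    exact IsEStar.extension ↥O N' hN'c hNE' hQ'
  | directedUnion G O hdir hopen hmem hcover ih =>
    intro _ P hP
    refine IsEStar.directedUnion ↥P (fun i => (O i).subgroupOf P) ?_ ?_ ?_ ?_
    · intro i j
      obtain ⟨k, hik, hjk⟩ := hdir i j
      exact ⟨k, Subgroup.comap_mono hik, Subgroup.comap_mono hjk⟩
    · intro i
      rw [Subgroup.coe_subgroupOf]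
      exact (hopen i).preimage continuous_subtype_val
    · intro i
      have hPOi : IsOpen ((P.subgroupOf (O i) : Subgroup ↥(O i)) : Set ↥(O i)) := by
        rw [Subgroup.coe_subgroupOf]
        exact hP.preimage continuous_subtype_val
      exact IsEStar.congr (ih i (P.subgroupOf (O i)) hPOi) (subgroupOfSwap P (O i))
        (continuous_subgroupOfSwap P (O i)) (continuous_subgroupOfSwap_symm P (O i))
    · intro p
      obtain ⟨i, hi⟩ := hcover p.1
      exact ⟨i, hi⟩

/-- Every open subgroup of a group in `E*` belongs to `E*`. -/
theorem IsEStar.of_openSubgroup (G : Type u) [Group G] [TopologicalSpace G]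
    [IsTopologicalGroup G] [LocallyCompactSpace G] [TotallyDisconnectedSpace G] [T2Space G]
    (hG : IsEStar G) (O : Subgroup G) (hO : IsOpen (O : Set G)) :
    IsEStar O := by
  exact IsEStar.openSubgroup_aux hG O hO
end

section
/- Let G ∈ E* be compactly generated with non-zero construction rank rk(G) = β + 1. Then the rank is witnessed by a group extension: there exists a closed normal subgroup H ⊴ G with rk(H) ≤ β and G/H profinite or discrete. -/
universe u

/-- The cumulative hierarchy `E*_α` defining the construction rank:
`E*_0` consists of profinite and discrete groups; `E*` is cumulative (monotone in `α`,
which encodes the unions at limit stages); and `G ∈ E*_{α+1}` if `G` is an extension of a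
group in `E*_α` with profinite or discrete quotient, or a directed union of open subgroups
lying in `E*_α`. -/
inductive EStarAt : Ordinal.{u} → ∀ (G : Type u) [Group G] [TopologicalSpace G], Prop
  | base (G : Type u) [Group G] [TopologicalSpace G] [IsTopologicalGroup G]
      (h : IsProfiniteGrp G ∨ DiscreteTopology G) : EStarAt 0 G
  | extension (α : Ordinal.{u}) (G : Type u) [Group G] [TopologicalSpace G] [IsTopologicalGroup G]
      (N : Subgroup G) [N.Normal] (hN : IsClosed (N : Set G))
      (hNE : EStarAt α N)
      (hQ : IsProfiniteGrp (G ⧸ N) ∨ DiscreteTopology (G ⧸ N)) : EStarAt (α + 1) G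
  | directedUnion (α : Ordinal.{u}) (G : Type u) [Group G] [TopologicalSpace G]
      [IsTopologicalGroup G] {ι : Type u} (O : ι → Subgroup G)
      (hdir : Directed (· ≤ ·) O)
      (hopen : ∀ i, IsOpen (O i : Set G))
      (hmem : ∀ i, EStarAt α (O i))
      (hcover : ∀ g : G, ∃ i, g ∈ O i) : EStarAt (α + 1) G
  | mono {α β : Ordinal.{u}} (h : α ≤ β) (G : Type u) [Group G] [TopologicalSpace G]
      (hG : EStarAt α G) : EStarAt β G

/-- The construction rank: the least `α` with `G ∈ E*_α`. -/
noncomputable def eStarRank (G : Type u) [Group G] [TopologicalSpace G] : Ordinal.{u} :=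
  sInf {α | EStarAt α G}

lemma eStar_aux {γ : Ordinal.{u}} {G : Type u} [Group G] [TopologicalSpace G]
    (h : EStarAt γ G) :
    ∀ β : Ordinal.{u}, γ = β + 1 → eStarRank G = β + 1 → CompactlyGeneratedGrp G →
    ∃ (H : Subgroup G) (_ : H.Normal), IsClosed (H : Set G) ∧ eStarRank H ≤ β ∧
      (IsProfiniteGrp (G ⧸ H) ∨ DiscreteTopology (G ⧸ H)) := by
  induction h with
  | base G h =>
    intro β hβ
    exact absurd hβ.symm (Ordinal.add_one_ne_zero β)
  | extension α G N hN hNE hQ =>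
    intro β hβ _ _
    have hαβ : α = β := by
      exact (Ordinal.add_right_cancel 1).1 (by simpa only [Nat.cast_one] using hβ)
    subst hαβ
    exact ⟨N, inferInstance, hN, csInf_le (OrderBot.bddBelow _) hNE, hQ⟩
  | directedUnion α G O hdir hopen hmem hcover =>
    intro β hβ _ hcg
    have hαβ : α = β := by
      exact (Ordinal.add_right_cancel 1).1 (by simpa only [Nat.cast_one] using hβ)
    subst hαβ
    obtain ⟨K, hK, hKgen⟩ := hcg
    haveI : Nonempty _ := ⟨(hcover 1).choose⟩
    obtain ⟨t, ht⟩ := hK.elim_finite_subcover (fun i => (O i : Set G)) hopen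
      (fun x _ => by simpa using hcover x)
    obtain ⟨i, hi⟩ := hdir.finset_le t
    have hKi : K ⊆ (O i : Set G) := fun x hx => by
      obtain ⟨j, hj, hxj⟩ := Set.mem_iUnion₂.1 (ht hx)
      exact hi j hj hxj
    have htop : O i = ⊤ := top_le_iff.1 (hKgen ▸ Subgroup.closure_le (O i) |>.2 hKi)
    refine ⟨O i, by rw [htop]; infer_instance, by rw [htop]; exact isClosed_univ,
      csInf_le (OrderBot.bddBelow _) (hmem i), ?_⟩
    rw [htop]
    haveI := QuotientGroup.subsingleton_quotient_top (G := G)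
    exact Or.inl ⟨inferInstance, inferInstance, inferInstance⟩
  | mono hle G hG ih =>
    intro β hβ hrk hcg
    rcases eq_or_lt_of_le hle with heq | hlt
    · exact ih β (heq.trans hβ) hrk hcg
    · exfalso
      have h1 : eStarRank G ≤ _ := csInf_le (OrderBot.bddBelow _) hG
      rw [hrk, ← hβ] at h1
      exact absurd (h1.trans_lt hlt) (lt_irrefl _)

/-- If `G ∈ E*` is compactly generated with construction rank `β + 1`, then the rank is
witnessed by a group extension: there is a closed normal `H ⊴ G` with `rk(H) ≤ β` and
`G/H` profinite or discrete. -/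
theorem eStarRank_witnessed_by_extension (G : Type u) [Group G] [TopologicalSpace G]
    [IsTopologicalGroup G] [LocallyCompactSpace G] [TotallyDisconnectedSpace G] [T2Space G]
    (hcg : CompactlyGeneratedGrp G) (β : Ordinal.{u})
    (hG : ∃ α : Ordinal.{u}, EStarAt α G) (hrk : eStarRank G = β + 1) :
    ∃ (H : Subgroup G) (_ : H.Normal), IsClosed (H : Set G) ∧ eStarRank H ≤ β ∧
      (IsProfiniteGrp (G ⧸ H) ∨ DiscreteTopology (G ⧸ H)) := by
  have hne : {α : Ordinal.{u} | EStarAt α G}.Nonempty := hG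
  have hmem : EStarAt (eStarRank G) G := csInf_mem hne
  rw [hrk] at hmem
  exact eStar_aux hmem β rfl hrk hcg
end

section
/- If O is an open subgroup of a totally disconnected locally compact group G and O ∈ E*, then rk(O) ≤ rk(G) whenever G ∈ E*. -/
universe u

open Topology in
/-- The restriction of an open embedding to the preimage of a subgroup is an open embedding. -/
lemma isOpenEmbedding_subgroupComap {H G : Type*} [Group H] [TopologicalSpace H]
    [Group G] [TopologicalSpace G] (f : H →* G) (hf : IsOpenEmbedding ⇑f)
    (K : Subgroup G) : IsOpenEmbedding ⇑(f.subgroupComap K) := by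
  have hcont : Continuous ⇑(f.subgroupComap K) :=
    Continuous.subtype_mk (hf.continuous.comp continuous_subtype_val) _
  have hinj : Function.Injective ⇑(f.subgroupComap K) := by
    intro x y hxy
    exact Subtype.ext (hf.injective (congrArg Subtype.val hxy))
  refine IsOpenEmbedding.of_continuous_injective_isOpenMap hcont hinj ?_
  intro U hU
  rw [isOpen_induced_iff] at hU
  obtain ⟨V, hV, rfl⟩ := hU
  have himg : ⇑(f.subgroupComap K) '' (Subtype.val ⁻¹' V) = Subtype.val ⁻¹' (⇑f '' V) := by
    ext y
    constructor
    · rintro ⟨x, hxV, rfl⟩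
      exact ⟨x.1, hxV, rfl⟩
    · rintro ⟨a, haV, ha⟩
      have haK : a ∈ K.comap f := by
        have : f a ∈ K := by rw [ha]; exact y.2
        exact this
      refine ⟨⟨a, haK⟩, haV, ?_⟩
      exact Subtype.ext ha
  rw [himg]
  exact (hf.isOpenMap V hV).preimage continuous_subtype_val

open Topology in
/-- Profiniteness/discreteness transfers along open embeddings of topological groups. -/
lemma profiniteOrDiscrete_of_isOpenEmbedding {H G : Type*} [Group H] [TopologicalSpace H]
    [Group G] [TopologicalSpace G] [IsTopologicalGroup G] (f : H →* G)
    (hf : IsOpenEmbedding ⇑f) (h : IsProfiniteGrp G ∨ DiscreteTopology G) :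
    IsProfiniteGrp H ∨ DiscreteTopology H := by
  rcases h with ⟨hc, htd, ht2⟩ | hd
  · left
    haveI := hc; haveI := htd; haveI := ht2
    refine ⟨?_, ?_, hf.isEmbedding.t2Space⟩
    · have hopen : IsOpen ((f.range : Subgroup G) : Set G) := by
        rw [MonoidHom.coe_range]; exact hf.isOpenMap.isOpen_range
      have hclosed : IsClosed (Set.range ⇑f) := by
        have := Subgroup.isClosed_of_isOpen f.range hopen
        rwa [MonoidHom.coe_range] at this
      constructor
      rw [hf.isEmbedding.isCompact_iff, Set.image_univ]
      exact hclosed.isCompact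
    · exact hf.isEmbedding.isTotallyDisconnected_range.mp
        (isTotallyDisconnected_of_totallyDisconnectedSpace _)
  · right
    haveI := hd
    exact hf.isEmbedding.discreteTopology

open Topology in
/-- The induced map on quotients of an open embedding is an open embedding. -/
lemma isOpenEmbedding_quotientGroupMap {H G : Type*} [Group H] [TopologicalSpace H]
    [Group G] [TopologicalSpace G] [IsTopologicalGroup G] (f : H →* G) (hf : IsOpenEmbedding ⇑f)
    (N : Subgroup G) [N.Normal] :
    IsOpenEmbedding ⇑(QuotientGroup.map (N.comap f) N f le_rfl) := by
  set q := QuotientGroup.map (N.comap f) N f le_rfl with hq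
  have hcomp : ⇑q ∘ (QuotientGroup.mk : H → H ⧸ N.comap f) =
      (QuotientGroup.mk : G → G ⧸ N) ∘ ⇑f := by
    funext x
    exact QuotientGroup.map_mk (N.comap f) N f le_rfl x
  have hcont : Continuous ⇑q := by
    rw [(QuotientGroup.isQuotientMap_mk (N.comap f)).continuous_iff, hcomp]
    exact (QuotientGroup.isQuotientMap_mk N).continuous.comp hf.continuous
  have hinj : Function.Injective ⇑q := by
    intro x y hxy
    obtain ⟨a, rfl⟩ := QuotientGroup.mk_surjective x
    obtain ⟨b, rfl⟩ := QuotientGroup.mk_surjective y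
    rw [QuotientGroup.map_mk, QuotientGroup.map_mk] at hxy
    rw [QuotientGroup.eq] at hxy ⊢
    show f (a⁻¹ * b) ∈ N
    rw [map_mul, map_inv]
    exact hxy
  refine IsOpenEmbedding.of_continuous_injective_isOpenMap hcont hinj ?_
  intro U hU
  have hU' : IsOpen ((QuotientGroup.mk : H → H ⧸ N.comap f) ⁻¹' U) :=
    hU.preimage (QuotientGroup.isQuotientMap_mk (N.comap f)).continuous
  have hsurj : Function.Surjective (QuotientGroup.mk : H → H ⧸ N.comap f) :=
    QuotientGroup.mk_surjective
  rw [← Set.image_preimage_eq U hsurj, ← Set.image_comp, hcomp, Set.image_comp]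
  exact QuotientGroup.isOpenMap_coe (⇑f '' _) (hf.isOpenMap _ hU')

open Topology in
/-- The key lemma: membership in `E*_α` passes to open embeddings. -/
theorem eStarAt_of_isOpenEmbedding : ∀ {α : Ordinal.{u}} {G : Type u} [Group G]
    [TopologicalSpace G], EStarAt α G → ∀ (H : Type u) [Group H] [TopologicalSpace H]
    [IsTopologicalGroup H] (f : H →* G), IsOpenEmbedding ⇑f → EStarAt α H := by
  intro α G _ _ hG
  induction hG with
  | base G h =>
    intro H _ _ _ f hf
    exact EStarAt.base H (profiniteOrDiscrete_of_isOpenEmbedding f hf h)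
  | extension α G N hN hNE hQ ih =>
    intro H _ _ _ f hf
    have hMclosed : IsClosed ((N.comap f : Subgroup H) : Set H) := hN.preimage hf.continuous
    have hME : EStarAt α ↥(N.comap f) :=
      ih ↥(N.comap f) (f.subgroupComap N) (isOpenEmbedding_subgroupComap f hf N)
    refine EStarAt.extension α H (N.comap f) hMclosed hME ?_
    exact profiniteOrDiscrete_of_isOpenEmbedding (QuotientGroup.map (N.comap f) N f le_rfl)
      (isOpenEmbedding_quotientGroupMap f hf N) hQ
  | directedUnion α G O hdir hopen hmem hcover ih =>
    intro H _ _ _ f hf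
    refine EStarAt.directedUnion α H (fun i => (O i).comap f) ?_ ?_ ?_ ?_
    · exact hdir.mono_comp _ (fun _ _ h => Subgroup.comap_mono h)
    · exact fun i => (hopen i).preimage hf.continuous
    · exact fun i => ih i ↥((O i).comap f) (f.subgroupComap (O i))
        (isOpenEmbedding_subgroupComap f hf (O i))
    · exact fun g => (hcover (f g)).imp fun i hi => hi
  | mono hle G hG ih =>
    intro H _ _ _ f hf
    exact EStarAt.mono hle H (ih H f hf)

/-- If `O` is an open subgroup of `G` with both `O, G ∈ E*`, then `rk(O) ≤ rk(G)`. -/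
theorem eStarRank_openSubgroup_le (G : Type u) [Group G] [TopologicalSpace G]
    [IsTopologicalGroup G] [LocallyCompactSpace G] [TotallyDisconnectedSpace G] [T2Space G]
    (O : Subgroup G) (hO : IsOpen (O : Set G))
    (hOmem : ∃ α : Ordinal.{u}, EStarAt α (↥O)) (hGmem : ∃ α : Ordinal.{u}, EStarAt α G) :
    eStarRank (↥O) ≤ eStarRank G := by
  obtain ⟨α, hα⟩ := hGmem
  have hne : {β : Ordinal.{u} | EStarAt β G}.Nonempty := ⟨α, hα⟩
  have hmem : EStarAt (eStarRank G) G := csInf_mem hne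
  have hOE : EStarAt (eStarRank G) ↥O :=
    eStarAt_of_isOpenEmbedding hmem ↥O O.subtype hO.isOpenEmbedding_subtypeVal
  exact csInf_le (OrderBot.bddBelow _) hOE
end

section
/- The class E* is closed under continuous injective preimages: if G ∈ E*, H is a totally disconnected locally compact Hausdorff group, and ψ : H → G is a continuous injective group homomorphism, then H ∈ E*. In particular, E* is closed under taking closed subgroups. -/
universe u

section Helpers

open Set Pointwise

/-- Total disconnectedness pulls back along continuous injections. -/
theorem totallyDisconnectedSpace_of_continuous_injective {X Y : Type*} [TopologicalSpace X]
    [TopologicalSpace Y] [TotallyDisconnectedSpace Y] {f : X → Y} (hf : Continuous f)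
    (hinj : Function.Injective f) : TotallyDisconnectedSpace X := by
  refine ⟨fun t _ ht => ?_⟩
  have himg : (f '' t).Subsingleton :=
    isTotallyDisconnected_of_totallyDisconnectedSpace (f '' t) (f '' t) Subset.rfl
      (ht.image f hf.continuousOn)
  intro x hx y hy
  exact hinj (himg ⟨x, hx, rfl⟩ ⟨y, hy, rfl⟩)

/-- van Dantzig: a t.d.l.c. Hausdorff group has a compact open subgroup. -/
theorem exists_compact_open_subgroup (H : Type*) [Group H] [TopologicalSpace H]
    [IsTopologicalGroup H] [LocallyCompactSpace H] [TotallyDisconnectedSpace H] [T2Space H] :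
    ∃ U : Subgroup H, IsCompact (U : Set H) ∧ IsOpen (U : Set H) := by
  obtain ⟨C, hCc, hCn⟩ := exists_compact_mem_nhds (1 : H)
  obtain ⟨W, hWclopen, h1W, hWsub⟩ :
      ∃ W, IsClopen W ∧ (1 : H) ∈ W ∧ W ⊆ interior C := by
    rcases (loc_compact_Haus_tot_disc_of_zero_dim (H := H)).mem_nhds_iff.mp
      (interior_mem_nhds.mpr hCn) with ⟨W, hW, h1W, hWsub⟩
    exact ⟨W, hW, h1W, hWsub⟩
  have hWcompact : IsCompact W :=
    hCc.of_isClosed_subset hWclopen.1 (hWsub.trans interior_subset)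
  -- find T ∈ 𝓝 1 with W * T ⊆ W
  have hmulclose : ∃ T ∈ nhds (1 : H), W * T ⊆ W := by
    apply hWcompact.induction_on (p := fun S => ∃ T ∈ nhds (1 : H), S * T ⊆ W)
      ⟨Set.univ, by simp only [Filter.univ_mem, Set.empty_mul, Set.empty_subset, and_self]⟩
      (fun _ _ huv ⟨T, hT, mem⟩ => ⟨T, hT, (mul_subset_mul_right huv).trans mem⟩)
      (fun U V ⟨T₁, hT₁, mem1⟩ ⟨T₂, hT₂, mem2⟩ => ⟨T₁ ∩ T₂, Filter.inter_mem hT₁ hT₂, by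
        rw [Set.union_mul]
        exact Set.union_subset (Set.mul_subset_mul_left Set.inter_subset_left |>.trans mem1)
          (Set.mul_subset_mul_left Set.inter_subset_right |>.trans mem2)⟩)
    intro x memW
    have hx1 : (x, (1 : H)) ∈ (fun p : H × H => p.1 * p.2) ⁻¹' W := by simp [memW]
    rcases isOpen_prod_iff.mp (continuous_mul.isOpen_preimage W hWclopen.2) x 1 hx1 with
      ⟨U, V, Uopen, Vopen, xmemU, onememV, prodsub⟩
    have h6 : U * V ⊆ W := Set.mul_subset_iff.mpr fun _ hx _ hy => prodsub (Set.mk_mem_prod hx hy)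
    exact ⟨U ∩ W, ⟨U, Uopen.mem_nhds xmemU, W, fun _ a => a, rfl⟩,
      V, Vopen.mem_nhds onememV, fun _ a => h6 ((Set.mul_subset_mul_right Set.inter_subset_left) a)⟩
  obtain ⟨S₀, hS₀nhds, hS₀mul⟩ := hmulclose
  rcases mem_nhds_iff.mp hS₀nhds with ⟨U₀, hU₀sub, hU₀open, h1U₀⟩
  set V : Set H := U₀ ∩ U₀⁻¹ with hV
  have hVopen : IsOpen V := hU₀open.inter hU₀open.inv
  have h1V : (1 : H) ∈ V := ⟨h1U₀, by simpa using h1U₀⟩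
  have hVinv : V⁻¹ = V := by simp [hV, Set.inter_comm]
  have hVsub : V ⊆ S₀ := fun x hx => hU₀sub hx.1
  have hVW : ∀ n : ℕ, V ^ (n + 1) ⊆ W := by
    intro n
    induction n with
    | zero =>
      rw [pow_one]
      intro v hv
      have : (1 : H) * v ∈ W := hS₀mul (Set.mul_mem_mul h1W (hVsub hv))
      simpa using this
    | succ n ih =>
      rw [pow_succ]
      intro v hv
      rcases hv with ⟨a, ha, b, hb, rfl⟩
      exact hS₀mul (Set.mul_mem_mul (ih ha) (hVsub hb))
  set SG : Subgroup H :=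
    { carrier := ⋃ n, V ^ (n + 1)
      mul_mem' := by
        intro a b ha hb
        rcases Set.mem_iUnion.mp ha with ⟨k, hk⟩
        rcases Set.mem_iUnion.mp hb with ⟨l, hl⟩
        apply Set.mem_iUnion.mpr
        refine ⟨k + 1 + l, ?_⟩
        rw [add_assoc, pow_add]
        exact Set.mul_mem_mul hk hl
      one_mem' := by
        apply Set.mem_iUnion.mpr
        exact ⟨0, by simpa using h1V⟩
      inv_mem' := by
        intro a ha
        rcases Set.mem_iUnion.mp ha with ⟨k, hk⟩
        apply Set.mem_iUnion.mpr
        refine ⟨k, ?_⟩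
        rw [← hVinv]
        simpa only [inv_pow, Set.mem_inv, inv_inv] using hk } with hSG
  have hSGopen : IsOpen (SG : Set H) := by
    apply isOpen_iUnion
    intro n
    induction n with
    | zero => simpa using hVopen
    | succ n ih => rw [pow_succ]; exact ih.mul_right
  have hSGsub : (SG : Set H) ⊆ W := by
    intro x hx
    rcases Set.mem_iUnion.mp hx with ⟨k, hk⟩
    exact hVW k hk
  exact ⟨SG, hWcompact.of_isClosed_subset (SG.isClosed_of_isOpen hSGopen) hSGsub, hSGopen⟩

/-- In a profinite group, every element `≠ 1` avoids some open normal subgroup. -/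
theorem profinite_exists_openNormal {K : Type*} [Group K] [TopologicalSpace K]
    [IsTopologicalGroup K] [CompactSpace K] [TotallyDisconnectedSpace K] [T2Space K]
    {k : K} (hk : k ≠ 1) :
    ∃ V : Subgroup K, IsOpen (V : Set K) ∧ V.Normal ∧ k ∉ V := by
  obtain ⟨W, hW, h1W, hWsub⟩ := compact_exists_isClopen_in_isOpen
    (isOpen_compl_singleton (x := k)) (by simpa using (Ne.symm hk))
  obtain ⟨V, hV⟩ := IsTopologicalGroup.exist_openNormalSubgroup_sub_clopen_nhds_of_one hW h1W
  refine ⟨V.toSubgroup, V.toOpenSubgroup.isOpen, V.isNormal', fun hkV => ?_⟩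
  exact hWsub (hV hkV) rfl

/-- An open normal subgroup yields a discrete quotient. -/
theorem discreteTopology_quotient_of_isOpen {H : Type*} [Group H] [TopologicalSpace H]
    [IsTopologicalGroup H] (P : Subgroup H) [P.Normal] (hP : IsOpen (P : Set H)) :
    DiscreteTopology (H ⧸ P) := by
  apply discreteTopology_of_isOpen_singleton_one
  rw [← (QuotientGroup.isQuotientMap_mk P).isOpen_preimage]
  have : ((QuotientGroup.mk : H → H ⧸ P) ⁻¹' {1}) = (P : Set H) := by
    ext x
    simp [QuotientGroup.eq_one_iff]
  rw [this]
  exact hP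

end Helpers

section Core
open Pointwise

/-- Core lemma: a compactly generated t.d.l.c. group mapping continuously to a profinite
group, whose "kernel-like" subgroups are all elementary, is in `E*`. -/
theorem isEStar_of_compactlyGenerated_aux
    (H : Type u) [Group H] [TopologicalSpace H] [IsTopologicalGroup H]
    [LocallyCompactSpace H] [TotallyDisconnectedSpace H] [T2Space H]
    (K : Type u) [Group K] [TopologicalSpace K] [IsTopologicalGroup K]
    (hK : IsProfiniteGrp K) (φ : H →* K) (hφ : Continuous φ)
    (hker : ∀ (L : Type u) [Group L] [TopologicalSpace L] [IsTopologicalGroup L]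
      [LocallyCompactSpace L] [TotallyDisconnectedSpace L] [T2Space L]
      (ρ : L →* H), Continuous ρ → Function.Injective ρ → (∀ x, φ (ρ x) = 1) → IsEStar L)
    (U : Subgroup H) (hUc : IsCompact (U : Set H)) (hUo : IsOpen (U : Set H))
    (S : Set H) (hSc : IsCompact S) (hSgen : Subgroup.closure S = ⊤) :
    IsEStar H := by
  obtain ⟨hKc, hKtd, hKt2⟩ := hK
  haveI := hKc; haveI := hKtd; haveI := hKt2
  set M : Subgroup H := φ.ker with hMdef
  have hMclosed : IsClosed (M : Set H) := by
    have : (M : Set H) = φ ⁻¹' {1} := by ext x; simp [hMdef, MonoidHom.mem_ker]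
    rw [this]; exact isClosed_singleton.preimage hφ
  set S' : Set H := S ∪ S⁻¹ with hS'def
  have hS'c : IsCompact S' := hSc.union hSc.inv
  set T : Set H := (fun p : H × H => p.1 * p.2 * p.1⁻¹) '' (S' ×ˢ (U : Set H)) with hTdef
  have hTc : IsCompact T := (hS'c.prod hUc).image (by fun_prop)
  let Ω := {V : Subgroup K // IsOpen (V : Set K) ∧ V.Normal}
  haveI : Nonempty Ω := ⟨⟨⊤, by simp, inferInstance⟩⟩
  have hVclosed : ∀ V : Ω, IsClosed (V.1 : Set K) := fun V => V.1.isClosed_of_isOpen V.2.1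
  have hInter : ∀ x : H, (∀ V : Ω, φ x ∈ V.1) → x ∈ M := by
    intro x hx
    by_contra hxM
    have hne : φ x ≠ 1 := by simpa [hMdef, MonoidHom.mem_ker] using hxM
    obtain ⟨V, hVo, hVn, hkV⟩ := profinite_exists_openNormal hne
    exact hkV (hx ⟨V, hVo, hVn⟩)
  have key : ∃ V : Ω, φ ⁻¹' (V.1 : Set K) ∩ T ⊆ (U : Set H) * (M : Set H) := by
    by_contra hcon
    push_neg at hcon
    set C : Ω → Set H := fun V => (φ ⁻¹' (V.1 : Set K) ∩ T) ∩ ((U : Set H) * (M : Set H))ᶜ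
      with hCdef
    have hCne : ∀ V, (C V).Nonempty := by
      intro V
      rcases Set.not_subset.mp (hcon V) with ⟨x, hx1, hx2⟩
      exact ⟨x, hx1, hx2⟩
    have hUMopen : IsOpen ((U : Set H) * (M : Set H)) := hUo.mul_right
    have hCcl : ∀ V, IsClosed (C V) := fun V =>
      (((hVclosed V).preimage hφ).inter hTc.isClosed).inter hUMopen.isClosed_compl
    have hCcompact : ∀ V, IsCompact (C V) := fun V =>
      hTc.of_isClosed_subset (hCcl V) fun x hx => hx.1.2
    have hCdir : Directed (· ⊇ ·) C := by
      intro V W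
      haveI := V.2.2; haveI := W.2.2
      refine ⟨⟨V.1 ⊓ W.1, ?_, inferInstance⟩, ?_, ?_⟩
      · rw [Subgroup.coe_inf]; exact V.2.1.inter W.2.1
      · intro x hx
        exact ⟨⟨(Subgroup.mem_inf.mp hx.1.1).1, hx.1.2⟩, hx.2⟩
      · intro x hx
        exact ⟨⟨(Subgroup.mem_inf.mp hx.1.1).2, hx.1.2⟩, hx.2⟩
    obtain ⟨x, hx⟩ := IsCompact.nonempty_iInter_of_directed_nonempty_isCompact_isClosed
      C hCdir hCne hCcompact hCcl
    have hxM : x ∈ M := hInter x fun V => (Set.mem_iInter.mp hx V).1.1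
    have hxUM : x ∈ (U : Set H) * (M : Set H) := ⟨1, U.one_mem, x, hxM, one_mul x⟩
    exact (Set.mem_iInter.mp hx (Classical.arbitrary Ω)).2 hxUM
  obtain ⟨V, hV⟩ := key
  haveI hMnormal : M.Normal := φ.normal_ker
  set A : Subgroup H := V.1.comap φ with hAdef
  haveI hAnormal : A.Normal := V.2.2.comap φ
  have hAopen : IsOpen (A : Set H) := by
    rw [hAdef, Subgroup.coe_comap]; exact V.2.1.preimage hφ
  have hAclosed : IsClosed (A : Set H) := A.isClosed_of_isOpen hAopen
  have hMA : M ≤ A := by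
    intro x hx
    have hx1 : φ x = 1 := hx
    simp only [hAdef, Subgroup.mem_comap, hx1]
    exact V.1.one_mem
  set B : Subgroup H := A ⊓ U with hBdef
  have hBopen : IsOpen (B : Set H) := by
    rw [hBdef, Subgroup.coe_inf]; exact hAopen.inter hUo
  have hBcompact : IsCompact (B : Set H) := by
    rw [hBdef, Subgroup.coe_inf]
    exact hUc.of_isClosed_subset (hAclosed.inter hUc.isClosed) Set.inter_subset_right
  set Pset : Set H := (B : Set H) * (M : Set H) with hPsetdef
  have hconj : ∀ s ∈ S', ∀ a ∈ B, s * a * s⁻¹ ∈ Pset := by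
    intro s hs a ha
    have haA : a ∈ A := ha.1
    have haU : a ∈ (U : Set H) := ha.2
    have hmemT : s * a * s⁻¹ ∈ T := ⟨(s, a), Set.mk_mem_prod hs haU, rfl⟩
    have hmemA : s * a * s⁻¹ ∈ A := hAnormal.conj_mem a haA s
    have hmemV : s * a * s⁻¹ ∈ φ ⁻¹' (V.1 : Set K) := hmemA
    obtain ⟨u, hu, m, hm, hum⟩ := hV ⟨hmemV, hmemT⟩
    have huA : u ∈ A := by
      have hueq : u = (s * a * s⁻¹) * m⁻¹ := by rw [← hum]; group
      rw [hueq]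
      exact A.mul_mem hmemA (A.inv_mem (hMA hm))
    exact ⟨u, ⟨huA, hu⟩, m, hm, hum⟩
  set P : Subgroup H :=
    { carrier := Pset
      one_mem' := ⟨1, B.one_mem, 1, M.one_mem, one_mul 1⟩
      mul_mem' := by
        rintro a b ⟨b₁, hb₁, m₁, hm₁, rfl⟩ ⟨b₂, hb₂, m₂, hm₂, rfl⟩
        refine ⟨b₁ * b₂, B.mul_mem hb₁ hb₂, (b₂⁻¹ * m₁ * b₂) * m₂,
          M.mul_mem (hMnormal.conj_mem' m₁ hm₁ b₂) hm₂, by group⟩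
      inv_mem' := by
        rintro a ⟨b, hb, m, hm, rfl⟩
        refine ⟨b⁻¹, B.inv_mem hb, b * m⁻¹ * b⁻¹, hMnormal.conj_mem m⁻¹ (M.inv_mem hm) b,
          by group⟩ } with hPdef
  have hPmem : ∀ x : H, x ∈ P ↔ x ∈ Pset := fun x => Iff.rfl
  have hBP : B ≤ P := fun b hb => ⟨b, hb, 1, M.one_mem, mul_one b⟩
  have hMPle : M ≤ P := fun m hm => ⟨1, B.one_mem, m, hm, one_mul m⟩
  have hPnormal : P.Normal := by
    constructor
    intro p hp g
    have hg : g ∈ Subgroup.closure S := by rw [hSgen]; trivial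
    have main : (∀ x ∈ P, g * x * g⁻¹ ∈ P) ∧ (∀ x ∈ P, g⁻¹ * x * g ∈ P) := by
      refine Subgroup.closure_induction
        (p := fun g _ => (∀ x ∈ P, g * x * g⁻¹ ∈ P) ∧ (∀ x ∈ P, g⁻¹ * x * g ∈ P))
        ?_ ?_ ?_ ?_ hg
      · intro s hs
        have hgen : ∀ t ∈ S', ∀ x ∈ P, t * x * t⁻¹ ∈ P := by
          rintro t ht x ⟨b, hb, m, hm, rfl⟩
          have h1 : t * b * t⁻¹ ∈ P := hconj t ht b hb
          have h2 : t * m * t⁻¹ ∈ P := hMPle (hMnormal.conj_mem m hm t)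
          have heq : t * (b * m) * t⁻¹ = (t * b * t⁻¹) * (t * m * t⁻¹) := by group
          rw [heq]
          exact P.mul_mem h1 h2
        constructor
        · exact hgen s (Or.inl hs)
        · intro x hx
          have : s⁻¹ * x * (s⁻¹)⁻¹ ∈ P :=
            hgen s⁻¹ (Or.inr (by simpa using hs)) x hx
          simpa using this
      · exact ⟨fun x hx => by simpa using hx, fun x hx => by simpa using hx⟩
      · rintro a b _ _ ⟨ha1, ha2⟩ ⟨hb1, hb2⟩
        constructor
        · intro x hx
          have h := ha1 _ (hb1 x hx)
          have heq : a * (b * x * b⁻¹) * a⁻¹ = (a * b) * x * (a * b)⁻¹ := by group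
          rwa [heq] at h
        · intro x hx
          have h := hb2 _ (ha2 x hx)
          have heq : b⁻¹ * (a⁻¹ * x * a) * b = (a * b)⁻¹ * x * (a * b) := by group
          rwa [heq] at h
      · rintro a _ ⟨ha1, ha2⟩
        exact ⟨fun x hx => by simpa using ha2 x hx, fun x hx => by simpa using ha1 x hx⟩
    exact main.1 p hp
  haveI := hPnormal
  have hPopen : IsOpen (P : Set H) := Subgroup.isOpen_mono hBP hBopen
  -- the group ↥P is elementary
  haveI : LocallyCompactSpace ↥P := hPopen.locallyCompactSpace
  set φP : ↥P →* K := φ.comp P.subtype with hφPdef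
  have hφPc : Continuous φP := hφ.comp continuous_subtype_val
  set M₁ : Subgroup ↥P := φP.ker with hM₁def
  have hM₁closed : IsClosed (M₁ : Set ↥P) := by
    have : (M₁ : Set ↥P) = φP ⁻¹' {1} := by ext x; simp [hM₁def, MonoidHom.mem_ker]
    rw [this]; exact isClosed_singleton.preimage hφPc
  have hM₁E : IsEStar ↥M₁ := by
    haveI : LocallyCompactSpace ↥M₁ := hM₁closed.locallyCompactSpace
    refine hker ↥M₁ (P.subtype.comp M₁.subtype)
      (continuous_subtype_val.comp continuous_subtype_val)
      (Subtype.val_injective.comp Subtype.val_injective) ?_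
    intro x
    exact x.2
  have hsurj : ∀ q : ↥P ⧸ M₁, ∃ d : ↥P, (d : H) ∈ (B : Set H) ∧ QuotientGroup.mk d = q := by
    intro q
    obtain ⟨x, rfl⟩ := QuotientGroup.mk_surjective q
    obtain ⟨b, hb, m, hm, hbm⟩ := x.2
    refine ⟨⟨b, hBP hb⟩, hb, ?_⟩
    rw [QuotientGroup.eq]
    have hmem : φ ((⟨b, hBP hb⟩ : ↥P)⁻¹ * x : ↥P) = 1 := by
      have hval : (((⟨b, hBP hb⟩ : ↥P)⁻¹ * x : ↥P) : H) = b⁻¹ * (x : H) := rfl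
      have hbx : b⁻¹ * (x : H) = m := by rw [← hbm]; group
      show φ ((((⟨b, hBP hb⟩ : ↥P)⁻¹ * x : ↥P) : H)) = 1
      rw [hval, hbx]
      exact hm
    exact hmem
  haveI hQc : CompactSpace (↥P ⧸ M₁) := by
    have hDc : IsCompact ((Subtype.val ⁻¹' (B : Set H)) : Set ↥P) := by
      rw [Subtype.isCompact_iff]
      have himg : Subtype.val '' ((Subtype.val ⁻¹' (B : Set H)) : Set ↥P) = (B : Set H) := by
        rw [Set.image_preimage_eq_inter_range, Subtype.range_coe]
        exact Set.inter_eq_left.mpr fun b hb => hBP hb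
      rw [himg]
      exact hBcompact
    have huniv : (Set.univ : Set (↥P ⧸ M₁))
        = QuotientGroup.mk '' ((Subtype.val ⁻¹' (B : Set H)) : Set ↥P) := by
      ext q
      simp only [Set.mem_univ, true_iff]
      obtain ⟨d, hd, hdq⟩ := hsurj q
      exact ⟨d, hd, hdq⟩
    constructor
    rw [huniv]
    exact hDc.image continuous_quot_mk
  have hφbarc : Continuous (QuotientGroup.kerLift φP) := by
    rw [(QuotientGroup.isQuotientMap_mk M₁).continuous_iff]
    have : (QuotientGroup.kerLift φP) ∘ (QuotientGroup.mk : ↥P → ↥P ⧸ M₁) = φP := by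
      funext x
      exact QuotientGroup.kerLift_mk φP x
    exact this ▸ hφPc
  haveI hQt2 : T2Space (↥P ⧸ M₁) :=
    T2Space.of_injective_continuous (QuotientGroup.kerLift_injective φP) hφbarc
  haveI hQtd : TotallyDisconnectedSpace (↥P ⧸ M₁) :=
    totallyDisconnectedSpace_of_continuous_injective hφbarc
      (QuotientGroup.kerLift_injective φP)
  have hPE : IsEStar ↥P := IsEStar.extension ↥P M₁ hM₁closed hM₁E (Or.inl ⟨hQc, hQtd, hQt2⟩)
  haveI : DiscreteTopology (H ⧸ P) := discreteTopology_quotient_of_isOpen P hPopen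
  exact IsEStar.extension H P (P.isClosed_of_isOpen hPopen) hPE (Or.inr inferInstance)

end Core

section Assemble
open Pointwise

/-- If a t.d.l.c. Hausdorff group maps continuously to a profinite group with all
"sub-kernel" groups elementary, it is in `E*`. -/
theorem isEStar_of_continuous_toProfinite
    (H : Type u) [Group H] [TopologicalSpace H] [IsTopologicalGroup H]
    [LocallyCompactSpace H] [TotallyDisconnectedSpace H] [T2Space H]
    (K : Type u) [Group K] [TopologicalSpace K] [IsTopologicalGroup K]
    (hK : IsProfiniteGrp K) (φ : H →* K) (hφ : Continuous φ)
    (hker : ∀ (L : Type u) [Group L] [TopologicalSpace L] [IsTopologicalGroup L]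
      [LocallyCompactSpace L] [TotallyDisconnectedSpace L] [T2Space L]
      (ρ : L →* H), Continuous ρ → Function.Injective ρ → (∀ x, φ (ρ x) = 1) → IsEStar L) :
    IsEStar H := by
  classical
  obtain ⟨U, hUc, hUo⟩ := exists_compact_open_subgroup H
  set O : Finset H → Subgroup H := fun F => Subgroup.closure ((U : Set H) ∪ (F : Set H))
    with hOdef
  have hUO : ∀ F, U ≤ O F := fun F x hx => Subgroup.subset_closure (Or.inl hx)
  have hOopen : ∀ F, IsOpen ((O F) : Set H) := fun F => Subgroup.isOpen_mono (hUO F) hUo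
  refine IsEStar.directedUnion H O ?_ hOopen ?_ ?_
  · intro F F'
    refine ⟨F ∪ F', Subgroup.closure_mono (Set.union_subset_union_right _ ?_),
      Subgroup.closure_mono (Set.union_subset_union_right _ ?_)⟩
    · exact Finset.coe_subset.mpr Finset.subset_union_left
    · exact Finset.coe_subset.mpr Finset.subset_union_right
  · intro F
    haveI : LocallyCompactSpace ↥(O F) := (hOopen F).locallyCompactSpace
    set S₀ : Set ↥(O F) := ((O F).subtype) ⁻¹' ((U : Set H) ∪ (F : Set H)) with hS₀def
    have hS₀gen : Subgroup.closure S₀ = ⊤ :=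
      Subgroup.closure_preimage_eq_top ((U : Set H) ∪ (F : Set H))
    have hS₀c : IsCompact S₀ := by
      rw [hS₀def, Subgroup.coe_subtype, Subtype.isCompact_iff]
      have himg : Subtype.val '' (Subtype.val ⁻¹' ((U : Set H) ∪ (F : Set H)) : Set ↥(O F))
          = (U : Set H) ∪ (F : Set H) := by
        rw [Set.image_preimage_eq_inter_range, Subtype.range_coe]
        exact Set.inter_eq_left.mpr Subgroup.subset_closure
      rw [himg]
      exact hUc.union F.finite_toSet.isCompact
    set U₀ : Subgroup ↥(O F) := U.subgroupOf (O F) with hU₀def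
    have hU₀coe : (U₀ : Set ↥(O F)) = Subtype.val ⁻¹' (U : Set H) := by
      rw [hU₀def, Subgroup.subgroupOf, Subgroup.coe_comap, Subgroup.coe_subtype]
    have hU₀o : IsOpen (U₀ : Set ↥(O F)) := by
      rw [hU₀coe]; exact hUo.preimage continuous_subtype_val
    have hU₀c : IsCompact (U₀ : Set ↥(O F)) := by
      rw [hU₀coe, Subtype.isCompact_iff]
      have himg : Subtype.val '' (Subtype.val ⁻¹' (U : Set H) : Set ↥(O F)) = (U : Set H) := by
        rw [Set.image_preimage_eq_inter_range, Subtype.range_coe]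
        exact Set.inter_eq_left.mpr (hUO F)
      rw [himg]
      exact hUc
    refine isEStar_of_compactlyGenerated_aux ↥(O F) K hK (φ.comp (O F).subtype)
      (hφ.comp continuous_subtype_val) ?_ U₀ hU₀c hU₀o S₀ hS₀c hS₀gen
    intro L _ _ _ _ _ _ ρ hc hi h1
    exact hker L ((O F).subtype.comp ρ) (continuous_subtype_val.comp hc)
      (Subtype.val_injective.comp hi) h1
  · intro g
    exact ⟨{g}, Subgroup.subset_closure (Or.inr (by simp))⟩

theorem isEStar_aux (G : Type u) [Group G] [TopologicalSpace G] (hG : IsEStar G) :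
    ∀ (H : Type u) [Group H] [TopologicalSpace H] [IsTopologicalGroup H]
      [LocallyCompactSpace H] [TotallyDisconnectedSpace H] [T2Space H]
      (ψ : H →* G), Continuous ψ → Function.Injective ψ → IsEStar H := by
  induction hG with
  | profinite G hprof =>
    intro H _ _ _ _ _ _ ψ hcont hinj
    refine isEStar_of_continuous_toProfinite H G hprof ψ hcont ?_
    intro L _ _ _ _ _ _ ρ hc hi h1
    haveI : Subsingleton L := ⟨fun a b => hi (hinj (by rw [h1 a, h1 b]))⟩
    exact IsEStar.profinite L ⟨inferInstance, inferInstance, inferInstance⟩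
  | discrete G =>
    intro H _ _ _ _ _ _ ψ hcont hinj
    have hsing : ({1} : Set H) = ψ ⁻¹' {1} := by
      ext x
      simp only [Set.mem_singleton_iff, Set.mem_preimage]
      constructor
      · rintro rfl; exact map_one ψ
      · intro hx; exact hinj (by rw [hx, map_one])
    haveI : DiscreteTopology H := discreteTopology_of_isOpen_singleton_one
      (by rw [hsing]; exact hcont.isOpen_preimage _ (isOpen_discrete _))
    exact IsEStar.discrete H
  | extension G N hNclosed hNE hQ ih =>
    intro H _ _ _ _ _ _ ψ hcont hinj
    set M : Subgroup H := N.comap ψ with hMdef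
    haveI hMnormal : M.Normal := Subgroup.Normal.comap inferInstance ψ
    have hMclosed : IsClosed (M : Set H) := by
      rw [hMdef, Subgroup.coe_comap]; exact hNclosed.preimage hcont
    rcases hQ with hQp | hQd
    · refine isEStar_of_continuous_toProfinite H (G ⧸ N) hQp ((QuotientGroup.mk' N).comp ψ)
        (QuotientGroup.continuous_mk.comp hcont) ?_
      intro L _ _ _ _ _ _ ρ hc hi h1
      have hmem : ∀ x, ψ (ρ x) ∈ N := fun x => (QuotientGroup.eq_one_iff _).mp (h1 x)
      exact ih L ((ψ.comp ρ).codRestrict N hmem) ((hcont.comp hc).subtype_mk _)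
        (fun a b hab => hi (hinj (congrArg Subtype.val hab)))
    · haveI := hQd
      have hMopen : IsOpen (M : Set H) := by
        have h1o : IsOpen ({(1 : G ⧸ N)} : Set (G ⧸ N)) := isOpen_discrete _
        have hpre : (M : Set H) = (fun x => ((ψ x : G) : G ⧸ N)) ⁻¹' {1} := by
          ext x
          simp [hMdef, Subgroup.mem_comap, QuotientGroup.eq_one_iff]
        rw [hpre]
        exact h1o.preimage (QuotientGroup.continuous_mk.comp hcont)
      have hME : IsEStar ↥M := by
        haveI : LocallyCompactSpace ↥M := hMclosed.locallyCompactSpace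
        refine ih ↥M ((ψ.comp M.subtype).codRestrict N (fun x => x.2))
          ((hcont.comp continuous_subtype_val).subtype_mk _) ?_
        intro a b hab
        exact Subtype.val_injective (hinj (congrArg Subtype.val hab))
      haveI : DiscreteTopology (H ⧸ M) := discreteTopology_quotient_of_isOpen M hMopen
      exact IsEStar.extension H M hMclosed hME (Or.inr inferInstance)
  | directedUnion G O hdir hopen hmem hcover ih =>
    intro H _ _ _ _ _ _ ψ hcont hinj
    refine IsEStar.directedUnion H (fun i => (O i).comap ψ) ?_ ?_ ?_ ?_
    · intro i j
      obtain ⟨k, hik, hjk⟩ := hdir i j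
      exact ⟨k, Subgroup.comap_mono hik, Subgroup.comap_mono hjk⟩
    · intro i
      rw [Subgroup.coe_comap]
      exact (hopen i).preimage hcont
    · intro i
      haveI : LocallyCompactSpace ↥((O i).comap ψ) := by
        have ho : IsOpen (((O i).comap ψ) : Set H) := by
          rw [Subgroup.coe_comap]; exact (hopen i).preimage hcont
        exact ho.locallyCompactSpace
      refine ih i ↥((O i).comap ψ) ((ψ.comp ((O i).comap ψ).subtype).codRestrict (O i)
        (fun x => x.2)) ((hcont.comp continuous_subtype_val).subtype_mk _) ?_
      intro a b hab
      exact Subtype.val_injective (hinj (congrArg Subtype.val hab))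
    · intro g
      obtain ⟨i, hi⟩ := hcover (ψ g)
      exact ⟨i, hi⟩

end Assemble

/-- `E*` is closed under continuous injective preimages: if `ψ : H → G` is a continuous
injective homomorphism of t.d.l.c. Hausdorff groups and `G ∈ E*`, then `H ∈ E*`. -/
theorem IsEStar.of_continuous_injective (G : Type u) [Group G] [TopologicalSpace G]
    [IsTopologicalGroup G] [LocallyCompactSpace G] [TotallyDisconnectedSpace G] [T2Space G]
    (H : Type u) [Group H] [TopologicalSpace H] [IsTopologicalGroup H]
    [LocallyCompactSpace H] [TotallyDisconnectedSpace H] [T2Space H]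
    (hG : IsEStar G) (ψ : H →* G) (hcont : Continuous ψ)
    (hinj : Function.Injective ψ) :
    IsEStar H :=
  isEStar_aux G hG H ψ hcont hinj
end

section
/- Let G ∈ E* be σ-compact and let K ⊴ G be a compact normal subgroup such that G/K is second countable. Then G/K belongs to the class E of elementary groups. -/
universe u

/-- The class `E` of elementary groups: the smallest class of t.d.l.c. second countable
groups containing second countable profinite groups and countable discrete groups, closed
under extensions with profinite or discrete quotient, and closed under countable increasing
unions of open subgroups. -/
inductive IsElementary : ∀ (G : Type u) [Group G] [TopologicalSpace G], Prop
  | profinite (G : Type u) [Group G] [TopologicalSpace G] [IsTopologicalGroup G]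
      [SecondCountableTopology G] (h : IsProfiniteGrp G) : IsElementary G
  | discrete (G : Type u) [Group G] [TopologicalSpace G] [IsTopologicalGroup G]
      [DiscreteTopology G] [Countable G] : IsElementary G
  | extension (G : Type u) [Group G] [TopologicalSpace G] [IsTopologicalGroup G]
      [LocallyCompactSpace G] [TotallyDisconnectedSpace G] [T2Space G]
      [SecondCountableTopology G]
      (N : Subgroup G) [N.Normal] (hN : IsClosed (N : Set G))
      (hNE : IsElementary N)
      (hQ : IsProfiniteGrp (G ⧸ N) ∨ DiscreteTopology (G ⧸ N)) : IsElementary G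
  | union (G : Type u) [Group G] [TopologicalSpace G] [IsTopologicalGroup G]
      [LocallyCompactSpace G] [TotallyDisconnectedSpace G] [T2Space G]
      [SecondCountableTopology G]
      (O : ℕ → Subgroup G) (hmono : Monotone O)
      (hopen : ∀ n, IsOpen (O n : Set G))
      (hmem : ∀ n, IsElementary (O n))
      (hcover : ∀ g : G, ∃ n, g ∈ O n) : IsElementary G


set_option linter.unusedSectionVars false
open Function Set

open Function Set



/-- A topological group whose identity component is trivial is totally disconnected. -/
lemma EAux.td_of_component_one {H : Type*} [Group H] [TopologicalSpace H] [IsTopologicalGroup H]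
    (h : connectedComponent (1 : H) = {1}) : TotallyDisconnectedSpace H := by
  rw [totallyDisconnectedSpace_iff_connectedComponent_singleton]
  intro x
  have h1 : (Homeomorph.mulLeft x) '' connectedComponent (1 : H) ⊆ connectedComponent x := by
    simpa using (Homeomorph.mulLeft x).continuous.image_connectedComponent_subset 1
  have h2 : (Homeomorph.mulLeft x).symm '' connectedComponent x ⊆ connectedComponent (1 : H) := by
    have := (Homeomorph.mulLeft x).symm.continuous.image_connectedComponent_subset x
    have e : (Homeomorph.mulLeft x).symm x = 1 := by
      simp [Homeomorph.mulLeft]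
    rw [e] at this
    simpa using this
  apply Subset.antisymm
  · intro y hy
    have : (Homeomorph.mulLeft x).symm y ∈ connectedComponent (1:H) :=
      h2 (mem_image_of_mem _ hy)
    rw [h] at this
    simp only [mem_singleton_iff] at this ⊢
    have := congrArg (Homeomorph.mulLeft x) this
    simpa using this
  · rw [h] at h1
    intro y hy
    simp only [mem_singleton_iff] at hy
    subst hy
    simpa using h1 (mem_image_of_mem _ rfl)

/-- If the identity component is contained in a totally disconnected subgroup, the group is
totally disconnected. -/
lemma EAux.td_of_component_subset {H : Type*} [Group H] [TopologicalSpace H] [IsTopologicalGroup H]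
    (M : Subgroup H) (htd : TotallyDisconnectedSpace M)
    (h : connectedComponent (1 : H) ⊆ (M : Set H)) : TotallyDisconnectedSpace H := by
  apply EAux.td_of_component_one
  have htd' : IsTotallyDisconnected (M : Set H) := by
    rw [← totallyDisconnectedSpace_subtype_iff]
    exact htd
  have hsub : (connectedComponent (1 : H)).Subsingleton :=
    htd' _ h isPreconnected_connectedComponent
  apply Subset.antisymm
  · intro y hy
    simpa using hsub hy (mem_connectedComponent (x := (1:H)))
  · intro y hy
    simp only [mem_singleton_iff] at hy
    subst hy
    exact mem_connectedComponent


variable {G : Type*} [Group G] [TopologicalSpace G] [IsTopologicalGroup G]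
variable {H : Type*} [Group H] [TopologicalSpace H] [IsTopologicalGroup H]

/-- In a compact totally disconnected Hausdorff group, the intersection of all open normal
subgroups is trivial. -/
lemma EAux.eq_one_of_mem_all [CompactSpace G] [T2Space G] [TotallyDisconnectedSpace G]
    {x : G} (hx : ∀ V : Subgroup G, IsOpen (V : Set G) → V.Normal → x ∈ V) : x = 1 := by
  by_contra hne
  have : TotallySeparatedSpace G := loc_compact_t2_tot_disc_iff_tot_sep.mp inferInstance
  obtain ⟨u, v, hu, hv, h1u, hxv, hcov, hdisj⟩ :=
    this.isTotallySeparated_univ (mem_univ (1 : G)) (mem_univ x) (Ne.symm hne)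
  have hucl : IsClopen u := by
    refine ⟨?_, hu⟩
    have : u = vᶜ := by
      apply Subset.antisymm
      · exact fun a ha hav => hdisj.le_bot ⟨ha, hav⟩
      · intro a ha
        rcases hcov (mem_univ a) with h | h
        · exact h
        · exact absurd h ha
    rw [this]
    exact hv.isClosed_compl
  obtain ⟨W, hW⟩ :=
    IsTopologicalGroup.exist_openNormalSubgroup_sub_clopen_nhds_of_one hucl h1u
  have : x ∈ W.toSubgroup := hx _ W.isOpen W.isNormal'
  exact hdisj.le_bot ⟨hW this, hxv⟩

/-- The continuous open image of a profinite group is totally disconnected. -/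
lemma EAux.td_of_image_profinite [CompactSpace G] [T2Space G] [TotallyDisconnectedSpace G]
    (φ : G →* H) (hker : IsClosed (φ.ker : Set G))
    (hc : Continuous φ) (hs : Surjective φ) (ho : IsOpenMap φ) :
    TotallyDisconnectedSpace H := by
  have hq : Topology.IsQuotientMap φ := ho.isQuotientMap hc hs
  apply EAux.td_of_component_one
  apply Subset.antisymm
  · intro y hy
    by_contra hy1
    obtain ⟨g, rfl⟩ := hs y
    have hgΓ : g ∉ φ.ker := fun hg => hy1 hg
    -- find an open normal subgroup V with g ∉ φ.ker ⊔ V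
    have hex : ∃ V : Subgroup G, IsOpen (V : Set G) ∧ V.Normal ∧ g ∉ φ.ker ⊔ V := by
      by_contra hcon
      push_neg at hcon
      set ONS := {V : Subgroup G // IsOpen (V : Set G) ∧ V.Normal} with hONS
      have hne : Nonempty ONS := ⟨⟨⊤, by simp, inferInstance⟩⟩
      set C : ONS → Set G := fun V => (φ.ker : Set G) ∩ {a | g⁻¹ * a ∈ V.1} with hC
      have hCne : ∀ V : ONS, (C V).Nonempty := by
        rintro ⟨V, hVo, hVn⟩
        haveI := hVn
        have hsup : g ∈ (↑(φ.ker ⊔ V) : Set G) := hcon V hVo hVn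
        rw [Subgroup.mul_normal] at hsup
        obtain ⟨a, ha, b, hb, hab⟩ := hsup
        exact ⟨a, ha, by simp only [mem_setOf_eq, ← hab, mul_comm, mul_assoc,
          inv_mul_cancel_left, mul_inv_cancel_left]; simpa using V.inv_mem hb⟩
      have hCcl : ∀ V : ONS, IsClosed (C V) := by
        rintro ⟨V, hVo, hVn⟩
        exact hker.inter
          ((V.isClosed_of_isOpen hVo).preimage (continuous_mul_left g⁻¹))
      have hCcp : ∀ V : ONS, IsCompact (C V) := fun V => (hCcl V).isCompact
      have hdirC : Directed (· ⊇ ·) C := by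
        rintro ⟨V, hVo, hVn⟩ ⟨V', hVo', hVn'⟩
        haveI := hVn; haveI := hVn'
        refine ⟨⟨V ⊓ V', hVo.inter hVo', inferInstance⟩, ?_, ?_⟩
        · exact inter_subset_inter le_rfl (fun a ha => ha.1)
        · exact inter_subset_inter le_rfl (fun a ha => ha.2)
      obtain ⟨γ, hγ⟩ := IsCompact.nonempty_iInter_of_directed_nonempty_isCompact_isClosed
        C hdirC hCne hCcp hCcl
      have hγker : γ ∈ φ.ker := (mem_iInter.mp hγ ⟨⊤, by simp, inferInstance⟩).1
      have : g⁻¹ * γ = 1 := by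
        apply EAux.eq_one_of_mem_all
        intro V hVo hVn
        exact (mem_iInter.mp hγ ⟨V, hVo, hVn⟩).2
      have : g = γ := by
        rw [inv_mul_eq_one] at this
        exact this.symm ▸ rfl
      exact hgΓ (this ▸ hγker)
    obtain ⟨V, hVo, hVn, hgW⟩ := hex
    set W := φ.ker ⊔ V with hW
    have hWo : IsOpen (W : Set G) := Subgroup.isOpen_mono le_sup_right hVo
    have hWcl : IsClosed (W : Set G) := W.isClosed_of_isOpen hWo
    have hpre : φ ⁻¹' (φ '' W) = (W : Set G) := by
      have : Subgroup.comap φ (Subgroup.map φ W) = W := by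
        rw [Subgroup.comap_map_eq, sup_eq_left]
        exact le_trans le_sup_left le_rfl
      calc φ ⁻¹' (φ '' W) = (Subgroup.comap φ (Subgroup.map φ W) : Set G) := by
            rw [Subgroup.coe_comap, Subgroup.coe_map]
        _ = (W : Set G) := by rw [this]
    have hSclopen : IsClopen (φ '' W) := by
      constructor
      · rw [← hq.isClosed_preimage, hpre]; exact hWcl
      · exact ho _ hWo
    have h1S : (1 : H) ∈ φ '' W := ⟨1, W.one_mem, φ.map_one⟩
    have hyS : φ g ∉ φ '' W := by
      intro hmem
      have : g ∈ φ ⁻¹' (φ '' W) := hmem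
      rw [hpre] at this
      exact hgW this
    exact hyS (hSclopen.connectedComponent_subset h1S hy)
  · intro y hy
    simp only [mem_singleton_iff] at hy
    subst hy
    exact mem_connectedComponent



lemma EAux.t2_target (φ : G →* H) (hker : IsClosed (φ.ker : Set G))
    (hc : Continuous φ) (hs : Surjective φ) (ho : IsOpenMap φ) : T2Space H := by
  rw [IsTopologicalGroup.t2Space_iff_one_closed, ← (ho.isQuotientMap hc hs).isClosed_preimage]
  rwa [← MonoidHom.coe_ker]

lemma EAux.sigmaCompact_target [SigmaCompactSpace G] (φ : G →* H)
    (hc : Continuous φ) (hs : Surjective φ) : SigmaCompactSpace H := by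
  rw [← isSigmaCompact_univ_iff]
  have huniv : (univ : Set H) = φ '' univ := by rw [image_univ, hs.range_eq]
  rw [huniv]
  exact isSigmaCompact_univ.image hc

lemma EAux.component_subset_ker {Q : Type*} [Group Q] [TopologicalSpace Q]
    [TotallyDisconnectedSpace Q] (π : H →* Q) (hc : Continuous π) :
    connectedComponent (1 : H) ⊆ (π.ker : Set H) := by
  intro x hx
  have himg := hc.image_connectedComponent_subset 1
  have hx2 : π x ∈ connectedComponent (π 1) := himg (mem_image_of_mem _ hx)
  rw [map_one, connectedComponent_eq_singleton] at hx2
  simpa [MonoidHom.mem_ker] using hx2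

lemma EAux.discreteTopology_quotient (M : Subgroup H) [M.Normal]
    (hM : IsOpen (M : Set H)) : DiscreteTopology (H ⧸ M) := by
  rw [discreteTopology_iff_isOpen_singleton]
  intro x
  obtain ⟨h, rfl⟩ := QuotientGroup.mk_surjective x
  have himg : ({(h : H ⧸ M)} : Set (H ⧸ M))
      = QuotientGroup.mk '' ((fun a => h * a) '' (M : Set H)) := by
    ext y
    simp only [mem_singleton_iff, mem_image, exists_exists_and_eq_and]
    constructor
    · rintro rfl
      exact ⟨1, M.one_mem, by simp⟩
    · rintro ⟨a, ha, rfl⟩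
      rw [eq_comm, QuotientGroup.eq]
      simpa using M.inv_mem ha
  rw [himg]
  exact QuotientGroup.isOpenMap_coe _ ((Homeomorph.mulLeft h).isOpenMap _ hM)

lemma EAux.subgroupMap_continuous (φ : G →* H) (hc : Continuous φ) (A : Subgroup G) :
    Continuous (φ.subgroupMap A) :=
  Continuous.subtype_mk (hc.comp continuous_subtype_val) _

lemma EAux.subgroupMap_ker_isCompact (φ : G →* H) (hc : Continuous φ) (A : Subgroup G)
    (hA : IsClosed (A : Set G)) (hk : IsCompact (φ.ker : Set G)) :
    IsCompact (((φ.subgroupMap A).ker : Subgroup A) : Set A) := by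
  rw [Topology.IsEmbedding.subtypeVal.isCompact_iff]
  have himg : (Subtype.val '' ((φ.subgroupMap A).ker : Set A) : Set G)
      = (φ.ker : Set G) ∩ (A : Set G) := by
    ext g
    constructor
    · rintro ⟨⟨a, haA⟩, hker, rfl⟩
      refine ⟨?_, haA⟩
      have : φ a = 1 := congrArg Subtype.val hker
      simpa [MonoidHom.mem_ker] using this
    · rintro ⟨hgker, hgA⟩
      refine ⟨⟨g, hgA⟩, ?_, rfl⟩
      have : φ g = 1 := hgker
      exact Subtype.ext (by simpa using this)
  rw [himg]
  exact hk.inter_right hA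

lemma EAux.subgroupMap_isOpenMap_of_isOpen (φ : G →* H) (ho : IsOpenMap φ)
    (A : Subgroup G) (hA : IsOpen (A : Set G)) : IsOpenMap (φ.subgroupMap A) := by
  intro U hU
  rw [isOpen_induced_iff] at hU
  obtain ⟨V, hV, rfl⟩ := hU
  rw [isOpen_induced_iff]
  refine ⟨φ '' (V ∩ A), ho _ (hV.inter hA), ?_⟩
  ext ⟨y, hy⟩
  simp only [mem_preimage]
  constructor
  · rintro ⟨x, ⟨hxV, hxA⟩, hxy⟩
    exact ⟨⟨x, hxA⟩, hxV, Subtype.ext hxy⟩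
  · rintro ⟨⟨x, hxA⟩, hxV, hxy⟩
    exact ⟨x, ⟨hxV, hxA⟩, congrArg Subtype.val hxy⟩

section KeyLemma
theorem EAux.key : ∀ (G : Type u) [Group G] [TopologicalSpace G], IsEStar G →
    ∀ [IsTopologicalGroup G] [LocallyCompactSpace G] [T2Space G] [TotallyDisconnectedSpace G]
      [SigmaCompactSpace G]
      (H : Type u) [Group H] [TopologicalSpace H] [IsTopologicalGroup H]
      [SecondCountableTopology H]
      (φ : G →* H), Continuous φ → Function.Surjective φ → IsOpenMap φ →
      IsCompact ((φ.ker : Subgroup G) : Set G) →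
      TotallyDisconnectedSpace H ∧ IsElementary H := by
  intro G _ _ hG
  induction hG with
  | profinite G h =>
    intro _ _ _ _ _ H _ _ _ _ φ hc hs ho hkerc
    haveI : CompactSpace G := h.1
    haveI : T2Space H := EAux.t2_target φ hkerc.isClosed hc hs ho
    haveI htdH : TotallyDisconnectedSpace H :=
      EAux.td_of_image_profinite φ hkerc.isClosed hc hs ho
    haveI : CompactSpace H := by
      refine ⟨?_⟩
      rw [← hs.range_eq, ← Set.image_univ]
      exact isCompact_univ.image hc
    exact ⟨htdH, IsElementary.profinite H ⟨inferInstance, inferInstance, inferInstance⟩⟩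
  | discrete G =>
    intro _ _ _ _ _ H _ _ _ _ φ hc hs ho hkerc
    haveI : DiscreteTopology H := by
      rw [discreteTopology_iff_isOpen_singleton]
      intro x
      obtain ⟨g, rfl⟩ := hs x
      have := ho {g} (isOpen_discrete _)
      rwa [Set.image_singleton] at this
    haveI : SigmaCompactSpace H := EAux.sigmaCompact_target φ hc hs
    haveI : Countable H := by
      rw [← Set.countable_univ_iff, ← iUnion_compactCovering]
      exact Set.countable_iUnion fun n =>
        ((isCompact_compactCovering H n).finite (IsDiscrete.univ.mono (subset_univ _))).countable
    exact ⟨inferInstance, IsElementary.discrete H⟩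
  | extension G N hN hNE hQ ih =>
    intro _ _ _ _ _ H _ _ _ _ φ hc hs ho hkerc
    have hqm : IsOpenQuotientMap φ := ⟨hs, hc, ho⟩
    have hq : Topology.IsQuotientMap φ := ho.isQuotientMap hc hs
    haveI : T2Space H := EAux.t2_target φ hkerc.isClosed hc hs ho
    haveI : LocallyCompactSpace H := hqm.locallyCompactSpace
    haveI : LocallyCompactSpace N := hN.locallyCompactSpace
    haveI : SigmaCompactSpace N := hN.sigmaCompactSpace
    set M : Subgroup H := N.map φ with hMdef
    haveI : M.Normal := Subgroup.Normal.map ‹N.Normal› φ hs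
    have hpre : φ ⁻¹' (M : Set H) = ((N ⊔ φ.ker : Subgroup G) : Set G) := by
      have : Subgroup.comap φ M = N ⊔ φ.ker := Subgroup.comap_map_eq φ N
      rw [← this, Subgroup.coe_comap]
    have hMcl : IsClosed (M : Set H) := by
      rw [← hq.isClosed_preimage, hpre, Subgroup.mul_normal]
      exact hN.mul_right_of_isCompact hkerc
    haveI : LocallyCompactSpace M := hMcl.locallyCompactSpace
    set ψ : N →* M := φ.subgroupMap N with hψdef
    have hψc : Continuous ψ := EAux.subgroupMap_continuous φ hc N
    have hψs : Function.Surjective ψ := φ.subgroupMap_surjective N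
    have hψo : IsOpenMap ψ := MonoidHom.isOpenMap_of_sigmaCompact ψ hψs hψc
    have hψk : IsCompact ((ψ.ker : Subgroup N) : Set N) :=
      EAux.subgroupMap_ker_isCompact φ hc N hN hkerc
    haveI : SecondCountableTopology M := Topology.IsEmbedding.subtypeVal.secondCountableTopology
    obtain ⟨htdM, helemM⟩ := ih M ψ hψc hψs hψo hψk
    have hQ' : IsProfiniteGrp (H ⧸ M) ∨ DiscreteTopology (H ⧸ M) := by
      rcases hQ with hQl | hQr
      · obtain ⟨hcmp, htdq, ht2q⟩ := hQl
        haveI := hcmp; haveI := htdq; haveI := ht2q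
        have hle : N ≤ Subgroup.comap φ M := fun n hn => ⟨n, hn, rfl⟩
        set ρ : (G ⧸ N) →* (H ⧸ M) := QuotientGroup.map N M φ hle with hρdef
        have hρmk : ∀ g : G, ρ ((g : G) : G ⧸ N) = ((φ g : H) : H ⧸ M) := fun g => rfl
        have hρc : Continuous ρ := by
          rw [← QuotientGroup.isOpenQuotientMap_mk.continuous_comp_iff]
          have : (ρ ∘ (QuotientGroup.mk : G → G ⧸ N))
              = fun g : G => ((φ g : H) : H ⧸ M) := funext fun g => hρmk g
          rw [this]
          exact QuotientGroup.continuous_mk.comp hc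
        have hρs : Function.Surjective ρ := by
          intro x
          obtain ⟨h, rfl⟩ := QuotientGroup.mk_surjective x
          obtain ⟨g, rfl⟩ := hs h
          exact ⟨((g : G) : G ⧸ N), hρmk g⟩
        have hρo : IsOpenMap ρ := by
          intro U hU
          have himg : ρ '' U = (QuotientGroup.mk : H → H ⧸ M) ''
              (φ '' ((QuotientGroup.mk : G → G ⧸ N) ⁻¹' U)) := by
            ext x
            constructor
            · rintro ⟨u, hu, rfl⟩
              obtain ⟨g, rfl⟩ := QuotientGroup.mk_surjective u
              exact ⟨φ g, ⟨g, hu, rfl⟩, (hρmk g).symm⟩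
            · rintro ⟨y, ⟨g, hg, rfl⟩, rfl⟩
              exact ⟨((g : G) : G ⧸ N), hg, (hρmk g).symm ▸ rfl⟩
          rw [himg]
          exact QuotientGroup.isOpenMap_coe _ (ho _ (hU.preimage QuotientGroup.continuous_mk))
        haveI : T2Space (H ⧸ M) := by
          rw [IsTopologicalGroup.t2Space_iff_one_closed,
            ← QuotientGroup.isOpenQuotientMap_mk.isQuotientMap.isClosed_preimage]
          have : ((QuotientGroup.mk : H → H ⧸ M) ⁻¹' {(1 : H ⧸ M)}) = (M : Set H) := by
            ext h
            simp [QuotientGroup.eq_one_iff]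
          rwa [this]
        haveI : CompactSpace (H ⧸ M) := by
          refine ⟨?_⟩
          rw [← hρs.range_eq, ← Set.image_univ]
          exact isCompact_univ.image hρc
        have hkerρcl : IsClosed ((ρ.ker : Subgroup (G ⧸ N)) : Set (G ⧸ N)) := by
          rw [MonoidHom.coe_ker]
          exact isClosed_singleton.preimage hρc
        have htdQ : TotallyDisconnectedSpace (H ⧸ M) :=
          EAux.td_of_image_profinite ρ hkerρcl hρc hρs hρo
        exact Or.inl ⟨inferInstance, htdQ, inferInstance⟩
      · haveI := hQr
        have hNopen : IsOpen (N : Set G) := by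
          have hps : ((QuotientGroup.mk : G → G ⧸ N) ⁻¹' {(1 : G ⧸ N)}) = (N : Set G) := by
            ext g
            simp [QuotientGroup.eq_one_iff]
          rw [← hps]
          exact (isOpen_discrete _).preimage QuotientGroup.continuous_mk
        have hMopen : IsOpen (M : Set H) := by
          rw [← hq.isOpen_preimage, hpre]
          exact Subgroup.isOpen_mono le_sup_left hNopen
        exact Or.inr (EAux.discreteTopology_quotient M hMopen)
    have htdQM : TotallyDisconnectedSpace (H ⧸ M) := by
      rcases hQ' with hp | hd
      · exact hp.2.1
      · haveI := hd; infer_instance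
    have hcomp : connectedComponent (1 : H) ⊆ (M : Set H) := by
      have := EAux.component_subset_ker (QuotientGroup.mk' M) QuotientGroup.continuous_mk
      rwa [QuotientGroup.ker_mk'] at this
    haveI htdH : TotallyDisconnectedSpace H := EAux.td_of_component_subset M htdM hcomp
    exact ⟨htdH, IsElementary.extension H M hMcl helemM hQ'⟩
  | directedUnion G O hdir hopen hmem hcover ih =>
    rename_i ι
    intro _ _ _ _ _ H _ _ _ _ φ hc hs ho hkerc
    have hqm : IsOpenQuotientMap φ := ⟨hs, hc, ho⟩
    haveI : T2Space H := EAux.t2_target φ hkerc.isClosed hc hs ho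
    haveI : LocallyCompactSpace H := hqm.locallyCompactSpace
    have hdirS : Directed (· ⊆ ·) (fun i => (O i : Set G)) := by
      intro i j
      obtain ⟨k, h1, h2⟩ := hdir i j
      exact ⟨k, h1, h2⟩
    haveI hι : Nonempty _ := ⟨(hcover 1).choose⟩
    have hsub : ∀ s : Set G, IsCompact s → ∃ i, s ⊆ (O i : Set G) := by
      intro s hscomp
      exact hscomp.elim_directed_cover _ (fun i => hopen i)
        (fun g _ => mem_iUnion.mpr (hcover g)) hdirS
    have hstep : ∀ i (n : ℕ), ∃ k, O i ≤ O k ∧ compactCovering G n ⊆ (O k : Set G) := by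
      intro i n
      obtain ⟨a, ha⟩ := hsub _ (isCompact_compactCovering G n)
      obtain ⟨b, hb1, hb2⟩ := hdir i a
      exact ⟨b, hb1, fun x hx => hb2 (ha hx)⟩
    obtain ⟨i0, hi0⟩ := hsub _ hkerc
    obtain ⟨j, hjsucc⟩ : ∃ j : ℕ → ι, ∀ n : ℕ, O (j n) ≤ O (j (n+1))
        ∧ compactCovering G (n+1) ⊆ (O (j (n+1)) : Set G) := by
      refine ⟨fun n => Nat.rec (motive := fun _ => _) i0
        (fun n k => (hstep k (n+1)).choose) n, fun n => ?_⟩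
      exact (hstep _ _).choose_spec
    have hjmono : Monotone fun n => O (j n) := monotone_nat_of_le_succ fun n => (hjsucc n).1
    set Q : ℕ → Subgroup H := fun n => (O (j n)).map φ with hQdef
    have hQmono : Monotone Q := fun m n hmn => Subgroup.map_mono (hjmono hmn)
    have hQopen : ∀ n, IsOpen (Q n : Set H) := by
      intro n
      rw [Subgroup.coe_map]
      exact ho _ (hopen _)
    have hQcover : ∀ h : H, ∃ n, h ∈ Q n := by
      intro h
      obtain ⟨g, rfl⟩ := hs h
      obtain ⟨n, hn⟩ := exists_mem_compactCovering g
      exact ⟨n + 1, ⟨g, (hjsucc n).2 (compactCovering_subset G (Nat.le_succ n) hn), rfl⟩⟩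
    have hmemQ : ∀ n, TotallyDisconnectedSpace (Q n) ∧ IsElementary (Q n) := by
      intro n
      have hAopen : IsOpen ((O (j n)) : Set G) := hopen _
      have hAcl : IsClosed ((O (j n)) : Set G) := (O (j n)).isClosed_of_isOpen hAopen
      haveI : LocallyCompactSpace (O (j n)) := hAcl.locallyCompactSpace
      haveI : SigmaCompactSpace (O (j n)) := hAcl.sigmaCompactSpace
      haveI : SecondCountableTopology (Q n) :=
        Topology.IsEmbedding.subtypeVal.secondCountableTopology
      exact ih (j n) (Q n) (φ.subgroupMap (O (j n)))
        (EAux.subgroupMap_continuous φ hc (O (j n)))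
        (φ.subgroupMap_surjective (O (j n)))
        (EAux.subgroupMap_isOpenMap_of_isOpen φ ho (O (j n)) hAopen)
        (EAux.subgroupMap_ker_isCompact φ hc (O (j n)) hAcl hkerc)
    haveI htdH : TotallyDisconnectedSpace H := by
      apply EAux.td_of_component_subset (Q 0) (hmemQ 0).1
      exact IsClopen.connectedComponent_subset
        ⟨(Q 0).isClosed_of_isOpen (hQopen 0), hQopen 0⟩ (Q 0).one_mem
    exact ⟨htdH, IsElementary.union H Q hQmono hQopen (fun n => (hmemQ n).2) hQcover⟩
end KeyLemma

/-- If `G ∈ E*` is σ-compact and `K ⊴ G` is a compact normal subgroup with `G/K` second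
countable, then `G/K` is an elementary group. -/
theorem quotient_isElementary_of_isEStar (G : Type u) [Group G] [TopologicalSpace G]
    [IsTopologicalGroup G] [LocallyCompactSpace G] [TotallyDisconnectedSpace G] [T2Space G]
    [SigmaCompactSpace G] (hG : IsEStar G)
    (K : Subgroup G) [K.Normal] (hKcl : IsClosed (K : Set G)) (hK : IsCompact (K : Set G))
    [SecondCountableTopology (G ⧸ K)] :
    IsElementary (G ⧸ K) := by
  obtain ⟨-, h⟩ := EAux.key G hG (G ⧸ K) (QuotientGroup.mk' K)
    QuotientGroup.continuous_mk (QuotientGroup.mk'_surjective K) QuotientGroup.isOpenMap_coe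
    (by rw [QuotientGroup.ker_mk']; exact hK)
  exact h
end

section
/- In any locally compact Hausdorff group G, if N ⊴ G is closed, then the identity component of G/N equals the image of the closure of NG° in G/N; equivalently, (G/N)° = cl(NG°)/N. -/
universe u

open Set Filter Topology
open scoped Pointwise

/-- The identity component is a normal subgroup. -/
instance connectedComponentOfOne_normal (G : Type u) [Group G] [TopologicalSpace G]
    [IsTopologicalGroup G] : (Subgroup.connectedComponentOfOne G).Normal := by
  constructor
  intro n hn g
  have hc : Continuous fun x : G => g * x * g⁻¹ :=
    (continuous_mul_right g⁻¹).comp (continuous_mul_left g)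
  have hsub := hc.image_connectedComponent_subset (1 : G)
  have h1 : g * (1 : G) * g⁻¹ = 1 := by simp
  rw [h1] at hsub
  exact hsub ⟨n, hn, rfl⟩



section Aux

variable {G : Type*} [Group G] [TopologicalSpace G] [IsTopologicalGroup G]

/-- Variant of `TopologicalGroup.exist_mul_closure_nhd` for a compact open set
in a not-necessarily-compact group. -/
lemma aux_exist_mul_closure_nhd {W : Set G} (Wopen : IsOpen W) (Wcpt : IsCompact W) :
    ∃ T ∈ 𝓝 (1 : G), W * T ⊆ W := by
  apply Wcpt.induction_on (p := fun S ↦ ∃ T ∈ 𝓝 (1 : G), S * T ⊆ W)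
    ⟨Set.univ, by simp only [univ_mem, Set.empty_mul, Set.empty_subset, and_self]⟩
    (fun _ _ huv ⟨T, hT, mem⟩ ↦ ⟨T, hT, (Set.mul_subset_mul_right huv).trans mem⟩)
    (fun U V ⟨T₁, hT₁, mem1⟩ ⟨T₂, hT₂, mem2⟩ ↦ ⟨T₁ ∩ T₂, inter_mem hT₁ hT₂, by
      rw [Set.union_mul]
      exact Set.union_subset ((Set.mul_subset_mul_left Set.inter_subset_left).trans mem1)
        ((Set.mul_subset_mul_left Set.inter_subset_right).trans mem2)⟩)
  intro x memW
  have : (x, (1 : G)) ∈ (fun p : G × G ↦ p.1 * p.2) ⁻¹' W := by simp [memW]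
  rcases isOpen_prod_iff.mp (continuous_mul.isOpen_preimage W Wopen) x 1 this with
    ⟨U, V, Uopen, Vopen, xmemU, onememV, prodsub⟩
  have h6 : U * V ⊆ W := Set.mul_subset_iff.mpr fun _ hx _ hy ↦ prodsub (Set.mk_mem_prod hx hy)
  exact ⟨U ∩ W, ⟨U, Uopen.mem_nhds xmemU, W, fun _ a ↦ a, rfl⟩,
    V, Vopen.mem_nhds onememV, fun _ a ↦ h6 ((Set.mul_subset_mul_right Set.inter_subset_left) a)⟩

/-- Any compact open neighbourhood of `1` contains an open subgroup. -/
lemma aux_exists_openSubgroup {W : Set G} (Wopen : IsOpen W) (Wcpt : IsCompact W)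
    (einW : (1 : G) ∈ W) : ∃ H : Subgroup G, IsOpen (H : Set G) ∧ (H : Set G) ⊆ W := by
  rcases aux_exist_mul_closure_nhd Wopen Wcpt with ⟨S₀, Smemnhds, mulclose⟩
  rcases mem_nhds_iff.mp Smemnhds with ⟨U, UsubS, Uopen, onememU⟩
  set V := U ∩ U⁻¹ with hVdef
  have Vnhd : V ∈ 𝓝 (1 : G) := by
    simp only [hVdef]
    exact Filter.inter_mem (Uopen.mem_nhds onememU) (inv_mem_nhds_one G (Uopen.mem_nhds onememU))
  have Vinv : V⁻¹ = V := by simp [hVdef, Set.inter_comm]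
  have VisOpen : IsOpen V := Uopen.inter Uopen.inv
  have Vmul : W * V ⊆ W := fun a ha ↦
    mulclose (Set.mul_subset_mul_left (UsubS.trans' Set.inter_subset_left) ha)
  let S : Subgroup G := {
    carrier := ⋃ n, V ^ (n + 1)
    mul_mem' := fun ha hb ↦ by
      rcases Set.mem_iUnion.mp ha with ⟨k, hk⟩
      rcases Set.mem_iUnion.mp hb with ⟨l, hl⟩
      apply Set.mem_iUnion.mpr
      use k + 1 + l
      rw [add_assoc, pow_add]
      exact Set.mul_mem_mul hk hl
    one_mem' := by
      apply Set.mem_iUnion.mpr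
      use 0
      simpa using mem_of_mem_nhds Vnhd
    inv_mem' := fun ha ↦ by
      rcases Set.mem_iUnion.mp ha with ⟨k, hk⟩
      apply Set.mem_iUnion.mpr
      use k
      rw [← Vinv]
      simpa only [inv_pow, Set.mem_inv, inv_inv] using hk }
  have hSopen : IsOpen (⋃ n, V ^ (n + 1)) := by
    refine isOpen_iUnion fun n ↦ ?_
    rw [pow_succ]
    exact VisOpen.mul_left
  refine ⟨S, hSopen, ?_⟩
  have mulVpow (n : ℕ) : W * V ^ (n + 1) ⊆ W := by
    induction' n with n ih
    · simpa using Vmul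
    · rw [pow_succ, ← mul_assoc]
      exact (Set.mul_subset_mul_right ih).trans Vmul
  have hpow (n : ℕ) : V ^ (n + 1) ⊆ W * V ^ (n + 1) := by
    intro x xin
    rw [Set.mem_mul]
    exact ⟨1, einW, x, xin, one_mul x⟩
  exact Set.iUnion_subset fun i a ha ↦ mulVpow i (hpow i ha)

/-- The quotient of a topological group by the identity component is totally disconnected. -/
lemma aux_td (G : Type*) [Group G] [TopologicalSpace G] [IsTopologicalGroup G] :
    TotallyDisconnectedSpace (G ⧸ Subgroup.connectedComponentOfOne G) := by
  set C := Subgroup.connectedComponentOfOne G with hC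
  rw [totallyDisconnectedSpace_iff_connectedComponent_singleton]
  intro x
  obtain ⟨g, rfl⟩ := QuotientGroup.mk_surjective x
  have key : ∀ a : G, (QuotientGroup.mk : G → G ⧸ C) ⁻¹' {(a : G ⧸ C)}
      = (a * ·) '' connectedComponent (1 : G) := by
    intro a
    ext z
    simp only [Set.mem_preimage, Set.mem_singleton_iff, Set.mem_image]
    constructor
    · intro h
      refine ⟨a⁻¹ * z, ?_, by group⟩
      have : a⁻¹ * z ∈ C := (QuotientGroup.eq).mp h.symm
      exact this
    · rintro ⟨w, hw, rfl⟩
      refine (QuotientGroup.eq).mpr ?_ |>.symm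
      have : a⁻¹ * (a * w) = w := by group
      rw [this]
      exact hw
  have hfib : ∀ y : G ⧸ C, IsConnected ((QuotientGroup.mk : G → G ⧸ C) ⁻¹' {y}) := by
    intro y
    obtain ⟨a, rfl⟩ := QuotientGroup.mk_surjective y
    rw [key a]
    exact (isConnected_connectedComponent).image _ (continuous_mul_left a).continuousOn
  have hq := QuotientGroup.isQuotientMap_mk C
  have h1 := hq.preimage_connectedComponent hfib g
  have h2 : connectedComponent g = (g * ·) '' connectedComponent (1 : G) := by
    apply Set.Subset.antisymm
    · intro z hz
      refine ⟨g⁻¹ * z, ?_, by group⟩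
      have h := (continuous_mul_left g⁻¹).image_connectedComponent_subset g
      have hz' : g⁻¹ * z ∈ connectedComponent (g⁻¹ * g) := h ⟨z, hz, rfl⟩
      simpa using hz'
    · rintro z ⟨w, hw, rfl⟩
      have h := (continuous_mul_left g).image_connectedComponent_subset 1
      have : g * w ∈ connectedComponent (g * 1) := h ⟨w, hw, rfl⟩
      simpa using this
  have h3 : (QuotientGroup.mk : G → G ⧸ C) ⁻¹' connectedComponent ((g : G ⧸ C))
      = (QuotientGroup.mk : G → G ⧸ C) ⁻¹' {(g : G ⧸ C)} := by
    rw [h1, h2, key g]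
  have h4 := congrArg (Set.image (QuotientGroup.mk : G → G ⧸ C)) h3
  rwa [Set.image_preimage_eq _ QuotientGroup.mk_surjective,
    Set.image_preimage_eq _ QuotientGroup.mk_surjective] at h4

/-- Main lemma: in a locally compact group, a point outside a closed normal subgroup
containing the identity component is avoided by an open subgroup containing it. -/
lemma aux_main {G : Type*} [Group G] [TopologicalSpace G] [IsTopologicalGroup G]
    [LocallyCompactSpace G] (H : Subgroup G) [H.Normal] (hH : IsClosed (H : Set G))
    (hle : connectedComponent (1 : G) ⊆ (H : Set G)) {g : G} (hg : g ∉ H) :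
    ∃ U : Subgroup G, IsOpen (U : Set G) ∧ H ≤ U ∧ g ∉ U := by
  set C := Subgroup.connectedComponentOfOne G with hC
  haveI : IsClosed (C : Set G) := isClosed_connectedComponent
  haveI : TotallyDisconnectedSpace (G ⧸ C) := aux_td G
  set σ := QuotientGroup.mk' C with hσ
  have hσcont : Continuous σ := continuous_quot_mk
  have hσsurj : Function.Surjective σ := QuotientGroup.mk'_surjective C
  have hCH : C ≤ H := fun x hx ↦ hle hx
  set H' := H.map σ with hH'
  have hpre : ((σ : G → G ⧸ C) ⁻¹' (H' : Set (G ⧸ C))) = (H : Set G) := by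
    rw [hH', Subgroup.coe_map]
    show (QuotientGroup.mk : G → G ⧸ C) ⁻¹' (QuotientGroup.mk '' (H : Set G)) = _
    rw [QuotientGroup.preimage_image_mk_eq_mul]
    apply Set.Subset.antisymm
    · rintro x ⟨h, hh, c, hc, rfl⟩
      exact H.mul_mem hh (hCH hc)
    · intro x hx
      exact ⟨x, hx, 1, (C.one_mem), mul_one x⟩
  have hH'closed : IsClosed (H' : Set (G ⧸ C)) := by
    rw [← (QuotientGroup.isQuotientMap_mk C).isClosed_preimage]
    show IsClosed ((σ : G → G ⧸ C) ⁻¹' (H' : Set (G ⧸ C)))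
    rw [hpre]; exact hH
  have hgH' : σ g ∉ H' := by
    intro hmem
    have : g ∈ (σ : G → G ⧸ C) ⁻¹' (H' : Set (G ⧸ C)) := hmem
    rw [hpre] at this
    exact hg this
  set Ω : Set (G ⧸ C) := (fun d ↦ σ g * d) ⁻¹' ((H' : Set (G ⧸ C))ᶜ) with hΩ
  have Ωopen : IsOpen Ω := hH'closed.isOpen_compl.preimage (continuous_mul_left _)
  have oneΩ : (1 : G ⧸ C) ∈ Ω := by
    simp only [hΩ, Set.mem_preimage, mul_one, Set.mem_compl_iff]
    exact hgH'
  obtain ⟨K, hKnhd, hKsub, hKcpt⟩ := local_compact_nhds (Ωopen.mem_nhds oneΩ)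
  obtain ⟨W, hWclopen, hW1, hWsub⟩ :=
    loc_compact_Haus_tot_disc_of_zero_dim.exists_subset_of_mem_open
      (mem_interior_iff_mem_nhds.mpr hKnhd) isOpen_interior
  have hWΩ : W ⊆ Ω := (hWsub.trans interior_subset).trans hKsub
  have hWcpt : IsCompact W := hKcpt.of_isClosed_subset hWclopen.isClosed
    (hWsub.trans interior_subset)
  obtain ⟨V, Vopen, hVW⟩ := aux_exists_openSubgroup hWclopen.isOpen hWcpt hW1
  haveI : H'.Normal := Subgroup.Normal.map ‹H.Normal› σ hσsurj
  set E := H' ⊔ V with hE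
  have hEopen : IsOpen (E : Set (G ⧸ C)) := by
    rw [hE, Subgroup.normal_mul]
    exact Vopen.mul_left
  have hgE : σ g ∉ E := by
    intro hmem
    have hmem' : (σ g : G ⧸ C) ∈ (H' : Set (G ⧸ C)) * (V : Set (G ⧸ C)) := by
      rw [← Subgroup.normal_mul]; exact hmem
    obtain ⟨h, hh, v, hv, heq⟩ := hmem'
    have hvinv : v⁻¹ ∈ Ω := hWΩ (hVW (V.inv_mem hv))
    have hne : σ g * v⁻¹ ∈ (H' : Set (G ⧸ C))ᶜ := hvinv
    apply hne
    have : σ g * v⁻¹ = h := by rw [← heq]; group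
    rw [this]
    exact hh
  refine ⟨E.comap σ, ?_, ?_, ?_⟩
  · exact hEopen.preimage hσcont
  · intro h hh
    exact Subgroup.mem_comap.mpr (Subgroup.mem_sup_left (Subgroup.mem_map_of_mem σ hh))
  · intro hmem
    exact hgE (Subgroup.mem_comap.mp hmem)

end Aux

/-- In a locally compact Hausdorff group `G`, for a closed normal subgroup `N` the
identity component of `G/N` is the image of the closure of `NG°`:
`(G/N)° = cl(NG°)/N`. -/
theorem connectedComponent_quotient_eq (G : Type u) [Group G] [TopologicalSpace G]
    [IsTopologicalGroup G] [LocallyCompactSpace G] [T2Space G]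
    (N : Subgroup G) [N.Normal] (hN : IsClosed (N : Set G)) :
    Subgroup.connectedComponentOfOne (G ⧸ N) =
      ((N ⊔ Subgroup.connectedComponentOfOne G).topologicalClosure).map
        (QuotientGroup.mk' N) := by
  set C := Subgroup.connectedComponentOfOne G with hC
  set H := (N ⊔ C).topologicalClosure with hHdef
  haveI : (N ⊔ C).Normal := Subgroup.sup_normal N C
  haveI : H.Normal := Subgroup.is_normal_topologicalClosure (N ⊔ C)
  have hHclosed : IsClosed (H : Set G) := Subgroup.isClosed_topologicalClosure (N ⊔ C)
  have hNH : N ≤ H := le_sup_left.trans (Subgroup.le_topologicalClosure (N ⊔ C))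
  have hCH : connectedComponent (1 : G) ⊆ (H : Set G) := fun x hx ↦
    (le_sup_right.trans (Subgroup.le_topologicalClosure (N ⊔ C))) (show x ∈ C from hx)
  set π := QuotientGroup.mk' N with hπ
  haveI : IsClosed (N : Set G) := hN
  apply le_antisymm
  · -- (G/N)° ≤ H.map π
    intro x hx
    obtain ⟨g, rfl⟩ := QuotientGroup.mk'_surjective N x
    by_contra hgm
    have hg : g ∉ H := by
      intro hgH
      exact hgm (Subgroup.mem_map_of_mem π hgH)
    obtain ⟨U, Uopen, hHU, hgU⟩ := aux_main H hHclosed hCH hg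
    -- the image of U in G/N is a clopen subgroup containing (G/N)°
    set V := U.map π with hV
    have hVopen : IsOpen (V : Set (G ⧸ N)) := by
      rw [hV, Subgroup.coe_map]
      exact QuotientGroup.isOpenMap_coe (N := N) U Uopen
    have hVclopen : IsClopen (V : Set (G ⧸ N)) :=
      ⟨V.isClosed_of_isOpen hVopen, hVopen⟩
    have hsub : connectedComponent (1 : G ⧸ N) ⊆ (V : Set (G ⧸ N)) :=
      hVclopen.connectedComponent_subset V.one_mem
    have : π g ∈ V := hsub hx
    obtain ⟨u, hu, hequ⟩ := this
    -- π u = π g implies u⁻¹ g ∈ N ≤ U, so g ∈ U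
    have : u⁻¹ * g ∈ N := (QuotientGroup.eq).mp hequ
    exact hgU (by simpa using U.mul_mem hu (hHU (hNH this)))
  · -- H.map π ≤ (G/N)°
    rintro x hxm
    obtain ⟨h, hh, rfl⟩ := hxm
    by_contra hc
    obtain ⟨V, Vopen, hconnV, hgV⟩ :=
      aux_main (G := G ⧸ N) (Subgroup.connectedComponentOfOne (G ⧸ N))
        isClosed_connectedComponent (fun x hx ↦ hx) hc
    set U₀ := V.comap π with hU₀
    have hU₀open : IsOpen (U₀ : Set G) := Vopen.preimage continuous_quot_mk
    have hU₀clopen : IsClopen (U₀ : Set G) := ⟨U₀.isClosed_of_isOpen hU₀open, hU₀open⟩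
    have hNU₀ : N ≤ U₀ := by
      intro n hn
      have : π n = 1 := (QuotientGroup.eq_one_iff n).mpr hn
      exact Subgroup.mem_comap.mpr (this ▸ V.one_mem)
    have hCU₀ : C ≤ U₀ := fun z hz ↦
      hU₀clopen.connectedComponent_subset U₀.one_mem (show z ∈ connectedComponent (1 : G) from hz)
    have hHU₀ : H ≤ U₀ :=
      Subgroup.topologicalClosure_minimal _ (sup_le hNU₀ hCU₀) (U₀.isClosed_of_isOpen hU₀open)
    exact hgV (Subgroup.mem_comap.mp (hHU₀ hh))
end
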